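/- arXiv:1806.00301 — 7 statements merged into one kernel-verified Lean document; each statement's English description precedes it below -/
import Mathlib

section
/- For every positive integer k that is not a perfect square and every real number s of the form s = u + v·√k with u, v ∈ ℚ and v ≠ 0, there exists a matrix A = !![a, b; c, d] in SL(2, ℤ) with |a + d| > 2 such that a·s + b = s·(c·s + d), i.e. s is a fixed point of a hyperbolic element of SL(2, ℤ). -/
noncomputable section

abbrev SL2Z := Matrix.SpecialLinearGroup (Fin 2) ℤ

/-- The Möbius action of `A ∈ SL(2, ℤ)` on `x ∈ ℝ`. -/
def mobius (A : SL2Z) (x : ℝ) : ℝ :=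
  ((A 0 0 : ℤ) * x + (A 0 1 : ℤ)) / ((A 1 0 : ℤ) * x + (A 1 1 : ℤ))

/-- The Möbius action of `A = !![a, b; c, d]` is defined at `x` if `c·x + d ≠ 0`. -/
def mobiusDefinedAt (A : SL2Z) (x : ℝ) : Prop :=
  ((A 1 0 : ℤ) : ℝ) * x + ((A 1 1 : ℤ) : ℝ) ≠ 0

/-- `x` is a fixed point of `A = !![a, b; c, d]` if `a·x + b = x·(c·x + d)`. -/
def IsFixedPt (A : SL2Z) (x : ℝ) : Prop :=
  (A 0 0 : ℤ) * x + (A 0 1 : ℤ) = x * ((A 1 0 : ℤ) * x + (A 1 1 : ℤ))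

/-- `A` is hyperbolic if `|a + d| > 2`. -/
def IsHyperbolic (A : SL2Z) : Prop := 2 < |A 0 0 + A 1 1|

/-- `P_ℤ` is the set of real fixed points of hyperbolic elements of SL(2, ℤ). -/
def PZ : Set ℝ := {x | ∃ A : SL2Z, IsHyperbolic A ∧ IsFixedPt A x}

/-- A real number is a quadratic irrational if it is irrational and of the form
`u + v·√k` with `u, v ∈ ℚ` and `k` a positive nonsquare integer. -/
def IsQuadIrr (s : ℝ) : Prop :=
  Irrational s ∧
    ∃ (u v : ℚ) (k : ℕ), 0 < k ∧ ¬ IsSquare k ∧ s = (u : ℝ) + (v : ℝ) * Real.sqrt k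

/-- Every real number of the form `u + v·√k` (`u, v ∈ ℚ`, `v ≠ 0`, `k` a positive
nonsquare integer) is a fixed point of a hyperbolic element of SL(2, ℤ). -/
theorem quad_irrational_is_fixed_point_of_hyperbolic
    (k : ℕ) (hk : 0 < k) (hksq : ¬ IsSquare k)
    (u v : ℚ) (hv : v ≠ 0) (s : ℝ) (hs : s = (u : ℝ) + (v : ℝ) * Real.sqrt k) :
    ∃ A : SL2Z, IsHyperbolic A ∧ IsFixedPt A s := by
  set a : ℤ := ((u.den : ℤ) * (v.den : ℤ)) ^ 2 with ha
  set b : ℤ := -2 * u.num * (u.den : ℤ) * (v.den : ℤ) ^ 2 with hb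
  set c : ℤ := u.num ^ 2 * (v.den : ℤ) ^ 2 - v.num ^ 2 * (u.den : ℤ) ^ 2 * (k : ℤ) with hc
  have hsqk : Real.sqrt k ^ 2 = (k : ℝ) := Real.sq_sqrt (by positivity)
  have hur : (u : ℝ) = (u.num : ℝ) / (u.den : ℝ) := by rw [Rat.cast_def]
  have hvr : (v : ℝ) = (v.num : ℝ) / (v.den : ℝ) := by rw [Rat.cast_def]
  have hud : ((u.den : ℕ) : ℝ) ≠ 0 := by exact_mod_cast u.den_nz
  have hvd : ((v.den : ℕ) : ℝ) ≠ 0 := by exact_mod_cast v.den_nz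
  -- s satisfies a s² + b s + c = 0
  have hquad : (a : ℝ) * s ^ 2 + (b : ℝ) * s + (c : ℝ) = 0 := by
    subst hs
    rw [ha, hb, hc, hur, hvr]
    push_cast
    field_simp
    linear_combination ((u.den : ℝ) ^ 2 * v.num ^ 2) * hsqk
  -- the discriminant
  set D : ℤ := b ^ 2 - 4 * a * c with hD
  set e : ℤ := 2 * (u.den : ℤ) ^ 2 * (v.den : ℤ) * v.num with he
  have hDe : D = e ^ 2 * (k : ℤ) := by rw [hD, he, ha, hb, hc]; ring
  have hvnum : v.num ≠ 0 := Rat.num_ne_zero.2 hv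
  have he0 : e ≠ 0 := by
    simp only [he, mul_ne_zero_iff]
    exact ⟨⟨⟨two_ne_zero, pow_ne_zero _ (Int.natCast_ne_zero.2 u.den_nz)⟩,
      Int.natCast_ne_zero.2 v.den_nz⟩, hvnum⟩
  have hD0 : 0 < D := by
    rw [hDe]
    exact mul_pos (by positivity) (by exact_mod_cast hk)
  have hDsq : ¬ IsSquare D := by
    rintro ⟨w, hw⟩
    have hdvd : e ∣ w := by
      rw [← Int.pow_dvd_pow_iff (two_ne_zero)]
      exact ⟨(k : ℤ), by rw [← hDe, hw]; ring⟩
    obtain ⟨m, hm⟩ := hdvd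
    apply hksq
    rw [← Int.isSquare_natCast_iff]
    refine ⟨m, ?_⟩
    have h' : e ^ 2 * (k : ℤ) = e ^ 2 * (m * m) := by rw [← hDe, hw, hm]; ring
    exact mul_left_cancel₀ (pow_ne_zero _ he0) h'
  -- Pell solution
  obtain ⟨x, y, hpell, hy⟩ := Pell.exists_of_not_isSquare hD0 hDsq
  have hy2 : 1 ≤ y ^ 2 := by
    rcases lt_or_gt_of_ne hy with h | h <;> nlinarith
  have hx2 : 2 ≤ x ^ 2 := by nlinarith
  -- the matrix
  refine ⟨⟨!![x - b * y, -2 * c * y; 2 * a * y, x + b * y], ?_⟩, ?_, ?_⟩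
  · simp only [Matrix.det_fin_two_of]
    linear_combination hpell + y ^ 2 * hD
  · show 2 < |_|
    simp only [Matrix.SpecialLinearGroup.coe_mk, Matrix.cons_val', Matrix.cons_val_zero,
      Matrix.cons_val_one, Matrix.head_cons, Matrix.empty_val', Matrix.cons_val_fin_one,
      Matrix.head_fin_const, Matrix.of_apply]
    have h2 : x - b * y + (x + b * y) = 2 * x := by ring
    rw [h2]
    have habs : 2 ≤ |x| := by nlinarith [abs_nonneg x, sq_abs x]
    calc (2 : ℤ) < 2 * 2 := by norm_num
    _ ≤ 2 * |x| := by linarith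
    _ = |2 * x| := by rw [abs_mul]; norm_num
  · show ((_ : ℤ) : ℝ) * s + ((_ : ℤ) : ℝ) = s * (((_ : ℤ) : ℝ) * s + ((_ : ℤ) : ℝ))
    simp only [Matrix.SpecialLinearGroup.coe_mk, Matrix.cons_val', Matrix.cons_val_zero,
      Matrix.cons_val_one, Matrix.head_cons, Matrix.empty_val', Matrix.cons_val_fin_one,
      Matrix.head_fin_const, Matrix.of_apply]
    push_cast
    linear_combination (-2 * (y : ℝ)) * hquad

end
end

section
/- A real number s is a fixed point of some hyperbolic element of SL(2, ℤ) if and only if s is a quadratic irrational. Moreover, every real fixed point of a parabolic element of SL(2, ℤ) is rational. -/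
noncomputable section

/-- A real square root of an integer square is `±√D`. -/
lemma aux_sq_cases (D : ℤ) (w : ℝ) (h : w ^ 2 = (D : ℝ)) :
    w = Real.sqrt (D : ℝ) ∨ w = -Real.sqrt (D : ℝ) := by
  have habs : |w| = Real.sqrt (D : ℝ) := by
    rw [← h, Real.sqrt_sq_eq_abs]
  exact (abs_eq (Real.sqrt_nonneg _)).mp habs

/-- If an irrational real satisfies an integer quadratic, the discriminant is a
positive nonsquare. -/
lemma aux_disc (P Q R : ℤ) (s : ℝ) (hP : P ≠ 0)
    (hq : (P : ℝ) * s ^ 2 + (Q : ℝ) * s + (R : ℝ) = 0) (hs : Irrational s) :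
    0 < Q ^ 2 - 4 * P * R ∧ ¬ IsSquare (Q ^ 2 - 4 * P * R) := by
  have hPR : (P : ℝ) ≠ 0 := Int.cast_ne_zero.mpr hP
  have hw : (2 * (P : ℝ) * s + Q) ^ 2 = ((Q ^ 2 - 4 * P * R : ℤ) : ℝ) := by
    push_cast
    linear_combination 4 * (P : ℝ) * hq
  have key : ∀ t : ℤ, 2 * (P : ℝ) * s + (Q : ℝ) = (t : ℝ) → False := by
    intro t ht
    refine hs ⟨((t - Q : ℤ) : ℚ) / ((2 * P : ℤ) : ℚ), ?_⟩
    push_cast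
    field_simp
    linarith [ht]
  have hnonsq : ¬ IsSquare (Q ^ 2 - 4 * P * R) := by
    rintro ⟨m, hm⟩
    have hw2 : (2 * (P : ℝ) * s + Q) ^ 2 = ((m ^ 2 : ℤ) : ℝ) := by
      rw [hw, hm]; push_cast; ring
    have hsqrt : Real.sqrt ((m ^ 2 : ℤ) : ℝ) = ((|m| : ℤ) : ℝ) := by
      push_cast
      rw [Real.sqrt_sq_eq_abs]
    rcases aux_sq_cases _ _ hw2 with h | h
    · exact key |m| (by rw [h, hsqrt])
    · exact key (-|m|) (by rw [h, hsqrt]; push_cast; ring)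
  refine ⟨?_, hnonsq⟩
  have hge : (0 : ℝ) ≤ ((Q ^ 2 - 4 * P * R : ℤ) : ℝ) := hw ▸ sq_nonneg _
  have hge' : 0 ≤ Q ^ 2 - 4 * P * R := by exact_mod_cast hge
  rcases hge'.lt_or_eq with h | h
  · exact h
  · exact absurd (h ▸ (⟨0, by ring⟩ : IsSquare (0 : ℤ))) hnonsq

/-- Key square-completion identity for fixed points. -/
lemma aux_key (A : SL2Z) (s : ℝ) (hfix : IsFixedPt A s) :
    (2 * (A 1 0 : ℝ) * s + ((A 1 1 : ℤ) - (A 0 0 : ℤ) : ℤ)) ^ 2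
      = (((A 0 0 + A 1 1) ^ 2 - 4 : ℤ) : ℝ) := by
  have hdet : A 0 0 * A 1 1 - A 0 1 * A 1 0 = 1 := by
    have := A.property
    rwa [Matrix.det_fin_two] at this
  have hdetR : (A 0 0 : ℝ) * (A 1 1 : ℤ) - (A 0 1 : ℤ) * (A 1 0 : ℤ) = 1 := by
    exact_mod_cast congrArg (fun z : ℤ => (z : ℝ)) hdet
  have hfix' : (A 0 0 : ℝ) * s + (A 0 1 : ℤ) = s * ((A 1 0 : ℤ) * s + (A 1 1 : ℤ)) := hfix
  push_cast
  linear_combination (-4 : ℝ) * (A 1 0 : ℤ) * hfix' - 4 * hdetR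

/-- `(den * q : ℚ)` is the numerator. -/
lemma aux_den_mul (q : ℚ) : ((q.den : ℚ)) * q = (q.num : ℚ) := by
  have hden : (q.den : ℚ) ≠ 0 := Nat.cast_ne_zero.mpr q.den_nz
  have h := Rat.num_div_den q
  rw [div_eq_iff hden] at h
  linear_combination -h

/-- A real number is a fixed point of some hyperbolic element of SL(2, ℤ) if and only
if it is a quadratic irrational; moreover every real fixed point of a parabolic element
of SL(2, ℤ) (trace of absolute value 2, `A ≠ ±1`) is rational. -/
theorem fixedPoint_hyperbolic_iff_quadIrr_and_parabolic_fixedPoints_rational :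
    (∀ s : ℝ, (∃ A : SL2Z, IsHyperbolic A ∧ IsFixedPt A s) ↔ IsQuadIrr s) ∧
    (∀ (A : SL2Z) (s : ℝ), |A 0 0 + A 1 1| = 2 → A ≠ 1 →
      (A : Matrix (Fin 2) (Fin 2) ℤ) ≠ -1 → IsFixedPt A s → ∃ q : ℚ, s = (q : ℝ)) := by
  constructor
  · intro s
    constructor
    · -- hyperbolic fixed point → quadratic irrational
      rintro ⟨A, hhyp, hfix⟩
      have hdet : A 0 0 * A 1 1 - A 0 1 * A 1 0 = 1 := by
        have := A.property
        rwa [Matrix.det_fin_two] at this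
      have hkey := aux_key A s hfix
      have htr : 2 < |A 0 0 + A 1 1| := hhyp
      obtain ⟨a, ha⟩ : ∃ z, A 0 0 = z := ⟨_, rfl⟩
      obtain ⟨b, hb⟩ : ∃ z, A 0 1 = z := ⟨_, rfl⟩
      obtain ⟨c, hcc⟩ : ∃ z, A 1 0 = z := ⟨_, rfl⟩
      obtain ⟨d, hdd⟩ : ∃ z, A 1 1 = z := ⟨_, rfl⟩
      simp only [ha, hb, hcc, hdd] at hdet hkey htr
      have hcne : c ≠ 0 := by
        intro h0
        rw [h0, mul_zero, sub_zero] at hdet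
        rcases Int.eq_one_or_neg_one_of_mul_eq_one' hdet with ⟨h1, h2⟩ | ⟨h1, h2⟩ <;>
          rw [h1, h2] at htr <;> norm_num at htr
      set D : ℤ := (a + d) ^ 2 - 4 with hD
      have hD3 : 3 ≤ |a + d| := htr
      have hDpos : 0 < D := by
        have h1 : 3 * 3 ≤ |a + d| * |a + d| :=
          mul_le_mul hD3 hD3 (by norm_num) (abs_nonneg _)
        have h2 := sq_abs (a + d)
        nlinarith [h1, h2]
      have hDnonsq : ¬ IsSquare D := by
        rintro ⟨m, hm⟩
        have hmabs : |m| * |m| = D := by rw [← abs_mul, ← hm, abs_of_pos hDpos]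
        have h1 : |m| < |a + d| := by
          by_contra hcon
          push_neg at hcon
          have := mul_le_mul hcon hcon (abs_nonneg _) (abs_nonneg _)
          nlinarith [sq_abs (a + d)]
        have h2 : |a + d| - 1 < |m| := by
          by_contra hcon
          push_neg at hcon
          have := mul_le_mul hcon hcon (abs_nonneg _) (by omega)
          nlinarith [sq_abs (a + d)]
        omega
      have hcr : (c : ℝ) ≠ 0 := Int.cast_ne_zero.mpr hcne
      have h2cr : ((2 * c : ℤ) : ℚ) ≠ 0 := by
        exact_mod_cast mul_ne_zero (two_ne_zero) hcne
      have hcastD : ((D.toNat : ℕ) : ℝ) = (D : ℝ) := by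
        exact_mod_cast congrArg (fun z : ℤ => (z : ℝ)) (Int.toNat_of_nonneg hDpos.le)
      have hnatnonsq : ¬ IsSquare D.toNat := by
        intro ⟨r, hr⟩
        apply hDnonsq
        exact ⟨(r : ℤ), by rw [← Int.toNat_of_nonneg hDpos.le, hr]; push_cast; ring⟩
      have hirrD : Irrational (Real.sqrt (D : ℝ)) := by
        rw [← hcastD]
        exact irrational_sqrt_natCast_iff.mpr hnatnonsq
      have hrep : ∀ ε : ℚ, (ε = 1 ∨ ε = -1) →
          2 * (c : ℝ) * s + ((d - a : ℤ) : ℝ) = (ε : ℝ) * Real.sqrt (D : ℝ) →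
          IsQuadIrr s := by
        intro ε hε h
        have hv : (ε / ((2 * c : ℤ) : ℚ) : ℚ) ≠ 0 := by
          apply div_ne_zero _ h2cr
          rcases hε with h' | h' <;> rw [h'] <;> norm_num
        have hs : s = (((a - d : ℤ) : ℚ) / ((2 * c : ℤ) : ℚ) : ℚ)
            + ((ε / ((2 * c : ℤ) : ℚ) : ℚ) : ℝ) * Real.sqrt (D : ℝ) := by
          push_cast
          push_cast at h
          field_simp
          linarith [h]
        refine ⟨?_, _, _, D.toNat, by omega, hnatnonsq, by rw [hs, hcastD]⟩
        rw [hs]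
        exact (hirrD.ratCast_mul hv).ratCast_add _
      rcases aux_sq_cases _ _ hkey with h | h
      · exact hrep 1 (Or.inl rfl) (by push_cast; push_cast at h; linarith [h])
      · exact hrep (-1) (Or.inr rfl) (by push_cast; push_cast at h; linarith [h])
    · -- quadratic irrational → hyperbolic fixed point
      rintro ⟨hirr, u, v, k, hk, hknonsq, hsuv⟩
      set q : ℚ := -(2 * u) with hqdef
      set r : ℚ := u ^ 2 - v ^ 2 * (k : ℚ) with hrdef
      have hqR : ((q : ℚ) : ℝ) = -(2 * (u : ℝ)) := by rw [hqdef]; push_cast; ring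
      have hrR : ((r : ℚ) : ℝ) = (u : ℝ) ^ 2 - (v : ℝ) ^ 2 * (k : ℝ) := by
        rw [hrdef]; push_cast; ring
      have hquadQ : s ^ 2 + (q : ℝ) * s + (r : ℝ) = 0 := by
        have h1 : s - (u : ℝ) = (v : ℝ) * Real.sqrt k := by rw [hsuv]; ring
        have h2 : (s - (u : ℝ)) ^ 2 = (v : ℝ) ^ 2 * (k : ℝ) := by
          rw [h1, mul_pow, Real.sq_sqrt (by positivity)]
        rw [hqR, hrR]
        linear_combination h2
      set P : ℤ := (q.den : ℤ) * (r.den : ℤ) with hPdef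
      set Q : ℤ := q.num * (r.den : ℤ) with hQdef
      set R : ℤ := r.num * (q.den : ℤ) with hRdef
      have hPpos : 0 < P := by
        rw [hPdef]
        positivity
      have hPQ : ((P : ℚ)) * q = (Q : ℚ) := by
        rw [hPdef, hQdef]
        push_cast
        linear_combination (r.den : ℚ) * aux_den_mul q
      have hPRq : ((P : ℚ)) * r = (R : ℚ) := by
        rw [hPdef, hRdef]
        push_cast
        linear_combination (q.den : ℚ) * aux_den_mul r
      have hquadZ : (P : ℝ) * s ^ 2 + (Q : ℝ) * s + (R : ℝ) = 0 := by
        have e1 : (Q : ℝ) = (P : ℝ) * ((q : ℚ) : ℝ) := by exact_mod_cast congrArg (fun z : ℚ => (z : ℝ)) hPQ.symm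
        have e2 : (R : ℝ) = (P : ℝ) * ((r : ℚ) : ℝ) := by exact_mod_cast congrArg (fun z : ℚ => (z : ℝ)) hPRq.symm
        rw [e1, e2]
        linear_combination (P : ℝ) * hquadQ
      obtain ⟨hDpos, hDnonsq⟩ := aux_disc P Q R s hPpos.ne' hquadZ hirr
      obtain ⟨x, y, hpell, hy⟩ := Pell.exists_of_not_isSquare hDpos hDnonsq
      let M : SL2Z := ⟨!![x - y * Q, -(2 * y * R); 2 * y * P, x + y * Q], by
        rw [Matrix.det_fin_two_of]
        linear_combination hpell⟩
      have e00 : M 0 0 = x - y * Q := by simp [M]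
      have e01 : M 0 1 = -(2 * y * R) := by simp [M]
      have e10 : M 1 0 = 2 * y * P := by simp [M]
      have e11 : M 1 1 = x + y * Q := by simp [M]
      refine ⟨M, ?_, ?_⟩
      · unfold IsHyperbolic
        rw [e00, e11]
        have hy2 : 1 ≤ y ^ 2 := by
          have h1 : y ^ 2 ≠ 0 := pow_ne_zero 2 hy
          have h2 : 0 < y ^ 2 := (sq_nonneg y).lt_of_ne (Ne.symm h1)
          omega
        have hx2 : 1 < x ^ 2 := by nlinarith [hpell, hDpos, hy2]
        have habs : 1 < |x| := by
          by_contra hcon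
          push_neg at hcon
          have := mul_le_mul hcon hcon (abs_nonneg x) (by norm_num)
          nlinarith [sq_abs x]
        have : (x - y * Q) + (x + y * Q) = 2 * x := by ring
        rw [this, abs_mul]
        simp only [abs_two]
        linarith
      · show ((x - y * Q : ℤ) : ℝ) * s + ((M 0 1 : ℤ) : ℝ)
          = s * (((M 1 0 : ℤ) : ℝ) * s + ((x + y * Q : ℤ) : ℝ))
        rw [e01, e10]
        push_cast
        linear_combination (-2 : ℝ) * (y : ℝ) * hquadZ
  · -- parabolic fixed points are rational
    intro A s htr hA1 hAneg1 hfix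
    have hdet : A 0 0 * A 1 1 - A 0 1 * A 1 0 = 1 := by
      have := A.property
      rwa [Matrix.det_fin_two] at this
    have hkey := aux_key A s hfix
    have hfix' : (A 0 0 : ℝ) * s + (A 0 1 : ℤ) = s * ((A 1 0 : ℤ) * s + (A 1 1 : ℤ)) := hfix
    have hAeta : (A : Matrix (Fin 2) (Fin 2) ℤ) = !![A 0 0, A 0 1; A 1 0, A 1 1] :=
      Matrix.eta_fin_two _
    obtain ⟨a, ha⟩ : ∃ z, A 0 0 = z := ⟨_, rfl⟩
    obtain ⟨b, hb⟩ : ∃ z, A 0 1 = z := ⟨_, rfl⟩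
    obtain ⟨c, hcc⟩ : ∃ z, A 1 0 = z := ⟨_, rfl⟩
    obtain ⟨d, hdd⟩ : ∃ z, A 1 1 = z := ⟨_, rfl⟩
    simp only [ha, hb, hcc, hdd] at hdet hkey htr hfix' hAeta
    have hD0 : ((a + d) ^ 2 - 4 : ℤ) = 0 := by
      have h2 : |a + d| * |a + d| = (a + d) ^ 2 := by rw [← sq_abs]; ring
      nlinarith [htr, h2]
    rw [hD0] at hkey
    have hw0 : 2 * (c : ℝ) * s + ((d - a : ℤ) : ℝ) = 0 := by
      have : ((0 : ℤ) : ℝ) = 0 := by norm_num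
      rw [this] at hkey
      exact sq_eq_zero_iff.mp hkey
    by_cases hcne : c = 0
    · exfalso
      rw [hcne, mul_zero, sub_zero] at hdet
      rw [hcne] at hw0 hfix'
      push_cast at hw0
      have hda : (d : ℝ) = (a : ℝ) := by linarith
      have hda' : d = a := by exact_mod_cast hda
      rw [hda'] at hdet hfix'
      push_cast at hfix'
      have hb0 : (b : ℝ) = 0 := by linear_combination hfix'
      have hb0' : b = 0 := by exact_mod_cast hb0
      rcases mul_self_eq_one_iff.mp hdet with h1 | h1
      · apply hA1
        apply Subtype.ext
        rw [Matrix.SpecialLinearGroup.coe_one, hAeta, hb0', hcne, hda', h1,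
          Matrix.one_fin_two]
      · apply hAneg1
        rw [hAeta, hb0', hcne, hda', h1]
        have hneg : (-1 : Matrix (Fin 2) (Fin 2) ℤ) = !![-1, 0; 0, -1] := by
          rw [show (-1 : Matrix (Fin 2) (Fin 2) ℤ) = -(1 : Matrix (Fin 2) (Fin 2) ℤ) from rfl,
            Matrix.one_fin_two]
          norm_num
        rw [hneg]
    · refine ⟨((a - d : ℤ) : ℚ) / ((2 * c : ℤ) : ℚ), ?_⟩
      have hcr : (c : ℝ) ≠ 0 := Int.cast_ne_zero.mpr hcne
      push_cast
      push_cast at hw0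
      field_simp
      linarith [hw0]

end
end

section
/- If s is a quadratic irrational, say s = u + v·√k with u, v ∈ ℚ, v ≠ 0 and k a positive nonsquare integer, and A ∈ SL(2, ℤ) with A ≠ 1 and A ≠ -1 has s as a fixed point, then A is hyperbolic (|tr A| > 2) and A also has the Galois conjugate s̄ = u − v·√k as a fixed point. -/
noncomputable section

lemma aux_rat_sqrt {r : ℝ} (hr : Irrational r) {p q : ℚ}
    (h : (p : ℝ) + (q : ℝ) * r = 0) : p = 0 ∧ q = 0 := by
  by_cases hq : q = 0
  · subst hq
    refine ⟨?_, rfl⟩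
    have hp : (p : ℝ) = 0 := by push_cast at h; linarith
    exact_mod_cast hp
  · exfalso
    apply hr
    refine ⟨-p / q, ?_⟩
    have hq' : (q : ℝ) ≠ 0 := by exact_mod_cast hq
    push_cast
    field_simp
    linarith

/-- If `A ∈ SL(2, ℤ)` with `A ≠ 1` and `A ≠ -1` has the quadratic irrational
`s = u + v·√k` as a fixed point, then `A` is hyperbolic and also has the Galois
conjugate `u − v·√k` as a fixed point. -/
theorem sl2z_fixing_quadIrr_is_hyperbolic_and_fixes_conjugate
    (k : ℕ) (hk : 0 < k) (hksq : ¬ IsSquare k)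
    (u v : ℚ) (hv : v ≠ 0) (s : ℝ) (hs : s = (u : ℝ) + (v : ℝ) * Real.sqrt k)
    (hirr : Irrational s)
    (A : SL2Z) (hA1 : A ≠ 1) (hA2 : (A : Matrix (Fin 2) (Fin 2) ℤ) ≠ -1)
    (hfix : IsFixedPt A s) :
    IsHyperbolic A ∧ IsFixedPt A ((u : ℝ) - (v : ℝ) * Real.sqrt k) := by
  set a := A 0 0 with ha
  set b := A 0 1 with hb
  set c := A 1 0 with hc
  set d := A 1 1 with hd
  have hdet : a * d - b * c = 1 := by
    have := A.2
    rw [Matrix.det_fin_two] at this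
    linarith [this]
  set r := Real.sqrt k with hrdef
  have hr2 : r * r = (k : ℝ) := Real.mul_self_sqrt (by positivity)
  have hrirr : Irrational r := irrational_sqrt_natCast_iff.mpr hksq
  unfold IsFixedPt at hfix
  rw [← ha, ← hb, ← hc, ← hd] at hfix
  by_cases hc0 : c = 0
  · exfalso
    rw [hc0] at hfix
    push_cast at hfix
    have key : ((a : ℝ) - d) * s + b = 0 := by linarith
    have had : a = d := by
      by_contra hne
      apply hirr
      refine ⟨(-b : ℚ) / ((a : ℚ) - d), ?_⟩
      have hne' : ((a : ℝ) - d) ≠ 0 := by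
        intro h
        apply hne
        exact_mod_cast sub_eq_zero.mp h
      push_cast
      field_simp
      linarith
    have hb0 : b = 0 := by
      have : (b : ℝ) = 0 := by rw [had] at key; linarith
      exact_mod_cast this
    rw [had, hb0, hc0] at hdet
    have hdd : d * d = 1 := by linarith
    rcases Int.isUnit_iff.mp (IsUnit.of_mul_eq_one (a := d) d hdd) with h1 | h1
    · apply hA1
      apply Subtype.ext
      ext i j
      fin_cases i <;> fin_cases j <;>
        simp [← ha, ← hb, ← hc, ← hd, had, hb0, hc0, h1, Matrix.one_apply]
    · apply hA2
      ext i j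
      fin_cases i <;> fin_cases j <;>
        simp [← ha, ← hb, ← hc, ← hd, had, hb0, hc0, h1, Matrix.one_apply]
  · -- c ≠ 0
    set P : ℚ := c * (u^2 + v^2 * k) + (d - a) * u - b with hP
    set Q : ℚ := 2 * c * u * v + (d - a) * v with hQ
    have key : (P : ℝ) + (Q : ℝ) * r = 0 := by
      rw [hs] at hfix
      push_cast [hP, hQ]
      linear_combination (-1 : ℝ) * hfix - (c : ℝ) * (v : ℝ)^2 * hr2
    obtain ⟨hP0, hQ0⟩ := aux_rat_sqrt hrirr key
    rw [hP] at hP0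
    rw [hQ] at hQ0
    have hconj : IsFixedPt A ((u : ℝ) - (v : ℝ) * r) := by
      unfold IsFixedPt
      rw [← ha, ← hb, ← hc, ← hd]
      have hP0' : ((c : ℝ) * ((u:ℝ)^2 + (v:ℝ)^2 * k) + ((d:ℝ) - a) * u - b) = 0 := by
        exact_mod_cast hP0
      have hQ0' : ((2 : ℝ) * c * u * v + ((d:ℝ) - a) * v) = 0 := by
        exact_mod_cast hQ0
      linear_combination (-1 : ℝ) * hP0' + r * hQ0' - (c : ℝ) * (v : ℝ)^2 * hr2
    refine ⟨?_, hconj⟩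
    have hda : (d : ℚ) - a = -2 * c * u := by
      have hfac : ((2:ℚ) * c * u + ((d:ℚ) - a)) * v = 0 := by linear_combination hQ0
      rcases mul_eq_zero.mp hfac with h1 | h1
      · linarith
      · exact absurd h1 hv
    have hc0' : (c : ℚ) ≠ 0 := by exact_mod_cast hc0
    have hcvk : (c : ℚ) * v^2 * k = b + c * u^2 := by
      linear_combination hP0 - u * hda
    have hdetQ : (a : ℚ) * d - b * c = 1 := by exact_mod_cast hdet
    have hsq : ((a : ℚ) + d)^2 = 4 + 4 * c^2 * v^2 * k := by
      linear_combination 4 * hdetQ - 4 * (c : ℚ) * hcvk - ((a : ℚ) - d + 2 * c * u) * hda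
    have hpos : (0 : ℚ) < 4 * c^2 * v^2 * k := by
      have hk' : (0:ℚ) < (k:ℚ) := by exact_mod_cast hk
      positivity
    have h4 : (4 : ℚ) < ((a : ℚ) + d)^2 := by linarith
    have h4' : (4 : ℤ) < (a + d)^2 := by exact_mod_cast h4
    unfold IsHyperbolic
    rw [← ha, ← hd]
    nlinarith [abs_nonneg (a + d), sq_abs (a + d)]


end
end

section
/- Let s ∈ P_ℤ and let St_s = {A = !![a, b; c, d] ∈ SL(2, ℤ) : a·s + b = s·(c·s + d)}. Then there exists a real number φ_s > 1 such that the map sending A = !![a, b; c, d] ∈ St_s to (c·s + d)⁻² (the derivative at s of the Möbius map of A) is a group homomorphism from St_s to the multiplicative group of positive reals whose kernel is {1, −1} and whose image equals {φ_s^n : n ∈ ℤ}. Moreover φ is constant on orbits: for every B ∈ SL(2, ℤ) whose Möbius action is defined at s, φ_{B·s} = φ_s. -/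
noncomputable section

/-- The derivative at `s` of the Möbius map of `A = !![a, b; c, d]`, namely
`(c·s + d)⁻²`. -/
def mobiusDeriv (A : SL2Z) (s : ℝ) : ℝ := ((((A 1 0 : ℤ) : ℝ) * s + ((A 1 1 : ℤ) : ℝ)) ^ 2)⁻¹

/-- denominator -/
def mden (A : SL2Z) (x : ℝ) : ℝ := ((A 1 0 : ℤ) : ℝ) * x + ((A 1 1 : ℤ) : ℝ)

lemma det2 (A : SL2Z) : A 0 0 * A 1 1 - A 0 1 * A 1 0 = 1 := by
  have := A.2; rwa [Matrix.det_fin_two] at this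

lemma mul_entry (A B : SL2Z) (i j : Fin 2) : (A*B) i j = A i 0 * B 0 j + A i 1 * B 1 j := by
  simp [Matrix.mul_apply, Fin.sum_univ_two]

lemma mden_ne_zero {x : ℝ} (hx : Irrational x) (A : SL2Z) : mden A x ≠ 0 := by
  intro h
  rcases eq_or_ne (A 1 0) 0 with hc | hc
  · have hd : A 1 1 ≠ 0 := by
      intro hd; have := det2 A; rw [hc, hd] at this; simp at this
    rw [mden, hc] at h
    simp at h
    exact hd (by exact_mod_cast h)
  · have : x = ((-(A 1 1 : ℚ) / (A 1 0 : ℚ) : ℚ) : ℝ) := by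
      have hc' : ((A 1 0 : ℤ) : ℝ) ≠ 0 := Int.cast_ne_zero.2 hc
      rw [mden] at h
      push_cast
      field_simp
      linarith
    exact hx ⟨_, this.symm⟩

lemma mden_cocycle (A B : SL2Z) {x : ℝ} (h : mden B x ≠ 0) :
    mden (A*B) x = mden A (mobius B x) * mden B x := by
  rw [mden, mden, mden, mobius, mul_entry, mul_entry]
  rw [mden] at h
  field_simp
  push_cast
  field_simp
  ring

lemma mobius_mul (A B : SL2Z) {x : ℝ} (h : mden B x ≠ 0) :
    mobius (A*B) x = mobius A (mobius B x) := by
  rw [mden] at h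
  have hn : ((((A*B) 0 0 : ℤ)) : ℝ) * x + (((A*B) 0 1 : ℤ) : ℝ)
      = (((A 0 0 : ℤ):ℝ) * mobius B x + ((A 0 1 : ℤ):ℝ)) * (((B 1 0 : ℤ):ℝ) * x + ((B 1 1 : ℤ):ℝ)) := by
    rw [mobius, mul_entry, mul_entry]
    field_simp
    push_cast
    field_simp
    ring
  have hd : ((((A*B) 1 0 : ℤ)) : ℝ) * x + (((A*B) 1 1 : ℤ) : ℝ)
      = (((A 1 0 : ℤ):ℝ) * mobius B x + ((A 1 1 : ℤ):ℝ)) * (((B 1 0 : ℤ):ℝ) * x + ((B 1 1 : ℤ):ℝ)) := by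
    rw [mobius, mul_entry, mul_entry]
    field_simp
    push_cast
    field_simp
    ring
  rw [mobius, hn, hd, mul_div_mul_right _ _ h]
  rfl

lemma mobius_one (x : ℝ) : mobius 1 x = x := by
  simp [mobius]

lemma isFixedPt_iff {A : SL2Z} {x : ℝ} (h : mden A x ≠ 0) : IsFixedPt A x ↔ mobius A x = x := by
  rw [mden] at h
  rw [IsFixedPt, mobius, div_eq_iff h]

lemma irrational_mobius {B : SL2Z} {x : ℝ} (hx : Irrational x) : Irrational (mobius B x) := by
  intro ⟨q, hq⟩
  have h := mden_ne_zero hx B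
  rw [mden] at h
  have h1 : ((B 0 0 : ℤ) : ℝ) * x + ((B 0 1 : ℤ) : ℝ) = (q:ℝ) * (((B 1 0 : ℤ) : ℝ) * x + ((B 1 1 : ℤ) : ℝ)) := by
    rw [mobius] at hq
    field_simp at hq ⊢
    have h' : x * ((B 1 0 : ℤ) : ℝ) + ((B 1 1 : ℤ) : ℝ) ≠ 0 := by rwa [mul_comm]
    rw [hq]; field_simp
  have h2 : (((B 0 0 : ℚ) - q * (B 1 0 : ℚ) : ℚ) : ℝ) * x = (((q * (B 1 1 : ℚ) - (B 0 1 : ℚ)) : ℚ) : ℝ) := by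
    push_cast
    ring_nf
    ring_nf at h1
    linarith
  rcases eq_or_ne ((B 0 0 : ℚ) - q * (B 1 0 : ℚ)) 0 with hz | hz
  · rw [hz] at h2
    simp at h2
    have hz2 : q * (B 1 1 : ℚ) - (B 0 1 : ℚ) = 0 := by exact_mod_cast h2.symm
    have hdet := det2 B
    have hdq : ((B 0 0 : ℚ)) * (B 1 1 : ℚ) - (B 0 1 : ℚ) * (B 1 0 : ℚ) = 1 := by exact_mod_cast hdet
    have : (0:ℚ) = 1 := by linear_combination hdq - ((B 1 1 : ℤ):ℚ) * hz - ((B 1 0 : ℤ):ℚ) * hz2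
    norm_num at this
  · have : x = (((q * (B 1 1 : ℚ) - (B 0 1 : ℚ)) / ((B 0 0 : ℚ) - q * (B 1 0 : ℚ)) : ℚ) : ℝ) := by
      have hz' : (((B 0 0 : ℚ) - q * (B 1 0 : ℚ) : ℚ) : ℝ) ≠ 0 := by exact_mod_cast hz
      push_cast at h2 hz' ⊢
      rw [eq_div_iff hz']
      linear_combination h2
    exact hx ⟨_, this.symm⟩

lemma mden_one (x : ℝ) : mden 1 x = 1 := by simp [mden]

lemma mderiv_eq (A : SL2Z) (x : ℝ) : mobiusDeriv A x = ((mden A x)^2)⁻¹ := rfl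

lemma mden_inv {A : SL2Z} {x : ℝ} (hx : Irrational x) :
    mden A⁻¹ (mobius A x) = (mden A x)⁻¹ := by
  have h := mden_ne_zero hx A
  have hc := mden_cocycle A⁻¹ A h
  rw [inv_mul_cancel, mden_one] at hc
  exact eq_inv_of_mul_eq_one_left hc.symm

lemma mobius_inv {A : SL2Z} {x : ℝ} (hx : Irrational x) :
    mobius A⁻¹ (mobius A x) = x := by
  rw [← mobius_mul A⁻¹ A (mden_ne_zero hx A), inv_mul_cancel, mobius_one]

lemma fix_one (x : ℝ) : IsFixedPt 1 x := by
  rw [IsFixedPt]; simp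

lemma fix_mul {A B : SL2Z} {x : ℝ} (hx : Irrational x) (hA : IsFixedPt A x)
    (hB : IsFixedPt B x) : IsFixedPt (A*B) x := by
  rw [isFixedPt_iff (mden_ne_zero hx _)]
  rw [mobius_mul A B (mden_ne_zero hx B), (isFixedPt_iff (mden_ne_zero hx B)).1 hB,
    (isFixedPt_iff (mden_ne_zero hx A)).1 hA]

lemma fix_inv {A : SL2Z} {x : ℝ} (hx : Irrational x) (hA : IsFixedPt A x) :
    IsFixedPt A⁻¹ x := by
  rw [isFixedPt_iff (mden_ne_zero hx _)]
  conv_lhs => rw [← (isFixedPt_iff (mden_ne_zero hx A)).1 hA]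
  exact mobius_inv hx

lemma mderiv_pos {x : ℝ} (hx : Irrational x) (A : SL2Z) : 0 < mobiusDeriv A x := by
  have h := mden_ne_zero hx A
  rw [mderiv_eq]
  positivity

lemma mderiv_one (x : ℝ) : mobiusDeriv 1 x = 1 := by
  rw [mderiv_eq, mden_one]; norm_num

lemma mderiv_mul {A B : SL2Z} {x : ℝ} (hx : Irrational x) (hA : IsFixedPt A x)
    (hB : IsFixedPt B x) :
    mobiusDeriv (A*B) x = mobiusDeriv A x * mobiusDeriv B x := by
  have hBd := mden_ne_zero hx B
  have h := mden_cocycle A B hBd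
  rw [(isFixedPt_iff hBd).1 hB] at h
  rw [mderiv_eq, mderiv_eq, mderiv_eq, h, mul_pow, mul_inv]

lemma mderiv_inv {A : SL2Z} {x : ℝ} (hx : Irrational x) (hA : IsFixedPt A x) :
    mobiusDeriv A⁻¹ x = (mobiusDeriv A x)⁻¹ := by
  have h := mderiv_mul hx (fix_inv hx hA) hA
  rw [inv_mul_cancel, mderiv_one] at h
  exact eq_inv_of_mul_eq_one_left h.symm

lemma trace_rel {A : SL2Z} {s : ℝ} (hA : IsFixedPt A s) :
    mden A s ^ 2 + 1 = ((A 0 0 + A 1 1 : ℤ) : ℝ) * mden A s := by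
  have hdet := det2 A
  have hdetR : ((A 0 0 : ℤ):ℝ) * ((A 1 1 : ℤ):ℝ) - ((A 0 1 : ℤ):ℝ) * ((A 1 0 : ℤ):ℝ) = 1 := by
    exact_mod_cast hdet
  rw [IsFixedPt] at hA
  rw [mden]
  push_cast
  push_cast at hA
  linear_combination (-((A 1 0 : ℤ):ℝ)) * hA - hdetR

lemma transfer {x : ℝ} (hx : Irrational x) (B A : SL2Z) (hA : IsFixedPt A x) :
    IsFixedPt (B * A * B⁻¹) (mobius B x) ∧
      mobiusDeriv (B * A * B⁻¹) (mobius B x) = mobiusDeriv A x := by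
  set y := mobius B x with hy
  have hyirr : Irrational y := irrational_mobius hx
  have hB := mden_ne_zero hx B
  have hBi : mobius B⁻¹ y = x := mobius_inv hx
  have hdBi : mden B⁻¹ y = (mden B x)⁻¹ := mden_inv hx
  have hAx : mobius A x = x := (isFixedPt_iff (mden_ne_zero hx A)).1 hA
  have hmAB : mobius (A * B⁻¹) y = x := by
    rw [mobius_mul A B⁻¹ (mden_ne_zero hyirr B⁻¹), hBi, hAx]
  have hdAB : mden (A * B⁻¹) y = mden A x * (mden B x)⁻¹ := by
    rw [mden_cocycle A B⁻¹ (mden_ne_zero hyirr B⁻¹), hBi, hdBi]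
  have hassoc : B * A * B⁻¹ = B * (A * B⁻¹) := by group
  have hden : mden (B * A * B⁻¹) y = mden A x := by
    rw [hassoc, mden_cocycle B (A*B⁻¹) (mden_ne_zero hyirr _), hmAB, hdAB]
    field_simp
  constructor
  · rw [isFixedPt_iff (mden_ne_zero hyirr _), hassoc,
      mobius_mul B (A*B⁻¹) (mden_ne_zero hyirr _), hmAB]
  · rw [mderiv_eq, mderiv_eq, hden]

lemma int_sum {A : SL2Z} {x : ℝ} (hx : Irrational x) (hA : IsFixedPt A x) :
    ∃ n : ℤ, mobiusDeriv A x + (mobiusDeriv A x)⁻¹ = (n : ℝ) := by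
  refine ⟨(A 0 0 + A 1 1)^2 - 2, ?_⟩
  have hl : mden A x ≠ 0 := mden_ne_zero hx A
  have ht := trace_rel hA
  rw [mderiv_eq, inv_inv]
  have h2 : mden A x ^ 2 ≠ 0 := pow_ne_zero _ hl
  field_simp
  push_cast at ht ⊢
  linear_combination (mden A x ^ 2 + 1 + (((A 0 0 : ℤ):ℝ) + ((A 1 1 : ℤ):ℝ)) * mden A x) * ht

lemma entry_c_zero {A : SL2Z} {x : ℝ} (hx : Irrational x) {r : ℚ}
    (h : mden A x = (r : ℝ)) : A 1 0 = 0 := by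
  by_contra hc
  have hc' : ((A 1 0 : ℤ) : ℝ) ≠ 0 := Int.cast_ne_zero.2 hc
  have : x = (((r - (A 1 1 : ℚ)) / (A 1 0 : ℚ) : ℚ) : ℝ) := by
    rw [mden] at h
    have hq : ((A 1 0 : ℚ) : ℝ) ≠ 0 := by push_cast; exact hc'
    push_cast
    field_simp
    push_cast at h ⊢
    linarith
  exact hx ⟨_, this.symm⟩

lemma neg_one_entries : ((-1 : Matrix (Fin 2) (Fin 2) ℤ) 1 0 = 0) ∧
    ((-1 : Matrix (Fin 2) (Fin 2) ℤ) 1 1 = -1) := by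
  constructor <;> simp [Matrix.one_apply]

lemma kernel_lemma {s : ℝ} (hs : Irrational s) (A : SL2Z) (hA : IsFixedPt A s) :
    mobiusDeriv A s = 1 ↔ A = 1 ∨ (A : Matrix (Fin 2) (Fin 2) ℤ) = -1 := by
  constructor
  · intro h
    rw [mderiv_eq, inv_eq_one] at h
    have h2 : (mden A s - 1) * (mden A s + 1) = 0 := by ring_nf; linarith [h]
    rcases mul_eq_zero.1 h2 with h3 | h3
    · -- mden = 1
      have hd1 : mden A s = ((1:ℚ):ℝ) := by push_cast; linarith
      have hc := entry_c_zero hs hd1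
      have hd : A 1 1 = 1 := by
        rw [mden, hc] at hd1; push_cast at hd1; norm_num at hd1; exact_mod_cast hd1
      have hdet := det2 A
      rw [hc, hd] at hdet
      simp at hdet
      have hb : A 0 1 = 0 := by
        rw [IsFixedPt, hc, hd, hdet] at hA
        push_cast at hA
        have : ((A 0 1 : ℤ) : ℝ) = 0 := by linarith
        exact_mod_cast this
      left
      ext i j
      fin_cases i <;> fin_cases j <;>
        simp [hdet, hb, hc, hd, Matrix.one_apply]
    · -- mden = -1
      have hd1 : mden A s = ((-1:ℚ):ℝ) := by push_cast; linarith
      have hc := entry_c_zero hs hd1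
      have hd : A 1 1 = -1 := by
        rw [mden, hc] at hd1; push_cast at hd1; norm_num at hd1; exact_mod_cast hd1
      have hdet := det2 A
      rw [hc, hd] at hdet
      simp at hdet
      have ha : A 0 0 = -1 := by omega
      have hb : A 0 1 = 0 := by
        rw [IsFixedPt, hc, hd, ha] at hA
        push_cast at hA
        have : ((A 0 1 : ℤ) : ℝ) = 0 := by linarith
        exact_mod_cast this
      right
      ext i j
      fin_cases i <;> fin_cases j <;>
        simp [ha, hb, hc, hd, Matrix.one_apply]
  · rintro (rfl | h)
    · exact mderiv_one s
    · have hc : A 1 0 = 0 := by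
        show (A : Matrix (Fin 2) (Fin 2) ℤ) 1 0 = 0
        rw [h]; exact neg_one_entries.1
      have hd : A 1 1 = -1 := by
        show (A : Matrix (Fin 2) (Fin 2) ℤ) 1 1 = -1
        rw [h]; exact neg_one_entries.2
      rw [mderiv_eq, mden, hc, hd]
      norm_num

lemma nonsq {t m : ℤ} (ht : 2 < |t|) : m^2 ≠ t^2 - 4 := by
  intro h
  have h1 : (3:ℤ) ≤ |t| := ht
  have h2 : |m| ^ 2 = |t|^2 - 4 := by rw [sq_abs, sq_abs]; exact h
  have hM : 0 ≤ |m| := abs_nonneg _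
  have hT : 0 ≤ |t| := abs_nonneg _
  have hMT : |m| < |t| := by nlinarith
  nlinarith

lemma irr_of_PZ {s : ℝ} (hs : s ∈ PZ) : Irrational s := by
  obtain ⟨M, hM, hfix⟩ := hs
  have hdet := det2 M
  have hc : M 1 0 ≠ 0 := by
    intro hc
    rw [hc, mul_zero, sub_zero] at hdet
    rcases Int.eq_one_or_neg_one_of_mul_eq_one' hdet with ⟨h1, h2⟩ | ⟨h1, h2⟩ <;>
      · rw [IsHyperbolic, h1, h2] at hM; norm_num at hM
  rintro ⟨q, hq⟩
  rw [IsFixedPt, ← hq] at hfix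
  have hQ : (M 0 0 : ℚ) * q + (M 0 1 : ℚ) = q * ((M 1 0 : ℚ) * q + (M 1 1 : ℚ)) := by
    exact_mod_cast hfix
  have hdetQ : (M 0 0 : ℚ) * (M 1 1 : ℚ) - (M 0 1 : ℚ) * (M 1 0 : ℚ) = 1 := by
    exact_mod_cast hdet
  set y : ℚ := 2*(M 1 0 : ℚ)*q + ((M 1 1 : ℚ) - (M 0 0 : ℚ)) with hy
  have hysq : y^2 = (((M 0 0 + M 1 1)^2 - 4 : ℤ) : ℚ) := by
    push_cast
    rw [hy]
    linear_combination (-4*(M 1 0 : ℚ)) * hQ - 4 * hdetQ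
  have hden : y.den = 1 := by
    have h1 : (y^2).den = 1 := by rw [hysq]; exact Rat.den_intCast _
    have h2 : (y^2).den = y.den^2 := rfl
    rw [h2] at h1
    rw [pow_two] at h1
    exact Nat.eq_one_of_mul_eq_one_right h1
  obtain hym := (Rat.den_eq_one_iff y).1 hden
  have hm2 : y.num ^ 2 = (M 0 0 + M 1 1)^2 - 4 := by
    have : ((y.num : ℚ))^2 = (((M 0 0 + M 1 1)^2 - 4 : ℤ) : ℚ) := by rw [hym]; exact hysq
    exact_mod_cast this
  exact nonsq hM hm2

lemma hyper_deriv_ne_one {M : SL2Z} {x : ℝ} (hx : Irrational x) (hM : IsHyperbolic M)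
    (hfix : IsFixedPt M x) : mobiusDeriv M x ≠ 1 := by
  intro h
  rw [mderiv_eq, inv_eq_one] at h
  have ht := trace_rel hfix
  rw [h] at ht
  -- 2 = t * mden
  have h2 : (mden M x - 1) * (mden M x + 1) = 0 := by ring_nf; nlinarith [h]
  have habs : 2 < |M 0 0 + M 1 1| := hM
  rcases mul_eq_zero.1 h2 with h3 | h3
  · have hl : mden M x = 1 := by linarith
    rw [hl] at ht
    have : ((M 0 0 + M 1 1 : ℤ) : ℝ) = 2 := by linarith
    have h4 : (M 0 0 + M 1 1 : ℤ) = 2 := by exact_mod_cast this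
    rw [h4] at habs; norm_num at habs
  · have hl : mden M x = -1 := by linarith
    rw [hl] at ht
    have : ((M 0 0 + M 1 1 : ℤ) : ℝ) = -2 := by linarith
    have h4 : (M 0 0 + M 1 1 : ℤ) = -2 := by exact_mod_cast this
    rw [h4] at habs; norm_num at habs

lemma gap_lemma {x : ℝ} (hx : Irrational x) {A : SL2Z} (hA : IsFixedPt A x)
    (hg : 1 < mobiusDeriv A x) : 5/2 ≤ mobiusDeriv A x := by
  by_contra hlt
  push_neg at hlt
  obtain ⟨n, hn⟩ := int_sum hx hA
  set g := mobiusDeriv A x with hgdef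
  have hpos : 0 < g := mderiv_pos hx A
  have hinv : g * g⁻¹ = 1 := mul_inv_cancel₀ (ne_of_gt hpos)
  have h2 : (2:ℝ) < n := by nlinarith
  have h3 : (n:ℝ) < 3 := by nlinarith
  have : (2:ℤ) < n := by exact_mod_cast h2
  have : (n:ℤ) < 3 := by exact_mod_cast h3
  omega

/-- For `s ∈ P_ℤ` there is `φ_s > 1` such that `A ↦ (c·s + d)⁻²` is a homomorphism from
the stabiliser of `s` in SL(2, ℤ) to the multiplicative group of positive reals, with
kernel `{1, -1}` and image `{φ_s ^ n : n ∈ ℤ}`; moreover `φ` is constant on the orbit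
of `s`. -/
theorem exists_phi_deriv_hom_stabiliser (s : ℝ) (hs : s ∈ PZ) :
    ∃ φ : ℝ, 1 < φ ∧
      (∀ A : SL2Z, IsFixedPt A s → 0 < mobiusDeriv A s) ∧
      (∀ A B : SL2Z, IsFixedPt A s → IsFixedPt B s →
        mobiusDeriv (A * B) s = mobiusDeriv A s * mobiusDeriv B s) ∧
      (∀ A : SL2Z, IsFixedPt A s →
        (mobiusDeriv A s = 1 ↔ A = 1 ∨ (A : Matrix (Fin 2) (Fin 2) ℤ) = -1)) ∧
      {r : ℝ | ∃ A : SL2Z, IsFixedPt A s ∧ mobiusDeriv A s = r} =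
        {r : ℝ | ∃ n : ℤ, r = φ ^ n} ∧
      (∀ B : SL2Z, mobiusDefinedAt B s →
        {r : ℝ | ∃ A : SL2Z, IsFixedPt A (mobius B s) ∧ mobiusDeriv A (mobius B s) = r} =
          {r : ℝ | ∃ n : ℤ, r = φ ^ n}) := by
  have hirr : Irrational s := irr_of_PZ hs
  obtain ⟨M, hMhyp, hMfix⟩ := hs
  set G : Set ℝ := {r : ℝ | ∃ A : SL2Z, IsFixedPt A s ∧ mobiusDeriv A s = r} with hGdef
  have hone : (1:ℝ) ∈ G := ⟨1, fix_one s, mderiv_one s⟩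
  have hmul : ∀ g h : ℝ, g ∈ G → h ∈ G → g * h ∈ G := by
    rintro _ _ ⟨A, hA, rfl⟩ ⟨B, hB, rfl⟩
    exact ⟨A*B, fix_mul hirr hA hB, mderiv_mul hirr hA hB⟩
  have hGinv : ∀ g : ℝ, g ∈ G → g⁻¹ ∈ G := by
    rintro _ ⟨A, hA, rfl⟩
    exact ⟨A⁻¹, fix_inv hirr hA, mderiv_inv hirr hA⟩
  have hGpos : ∀ g ∈ G, 0 < g := by rintro _ ⟨A, hA, rfl⟩; exact mderiv_pos hirr A
  have hgap : ∀ g ∈ G, 1 < g → 5/2 ≤ g := by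
    rintro _ ⟨A, hA, rfl⟩ h; exact gap_lemma hirr hA h
  set T := G ∩ Set.Ioi 1 with hTdef
  have hTne : T.Nonempty := by
    have hmem : mobiusDeriv M s ∈ G := ⟨M, hMfix, rfl⟩
    have hne : mobiusDeriv M s ≠ 1 := hyper_deriv_ne_one hirr hMhyp hMfix
    have hp : 0 < mobiusDeriv M s := mderiv_pos hirr M
    rcases lt_or_gt_of_ne hne with hlt | hgt
    · refine ⟨(mobiusDeriv M s)⁻¹, hGinv _ hmem, Set.mem_Ioi.2 ?_⟩
      have h1 := mul_inv_cancel₀ (ne_of_gt hp)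
      have hip : 0 < (mobiusDeriv M s)⁻¹ := inv_pos.2 hp
      nlinarith
    · exact ⟨_, hmem, hgt⟩
  have hTbdd : BddBelow T := ⟨1, fun t ht => le_of_lt ht.2⟩
  set φ := sInf T with hφdef
  have hφle : ∀ t ∈ T, φ ≤ t := fun t ht => csInf_le hTbdd ht
  have hφ52 : 5/2 ≤ φ := le_csInf hTne (fun t ht => hgap t ht.1 ht.2)
  have hφ1 : 1 < φ := by linarith
  have hφ0 : 0 < φ := by linarith
  have hφT : φ ∈ T := by
    by_contra hc
    have h1 : φ < φ * 2 := by linarith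
    obtain ⟨x, hxT, hx2⟩ := (csInf_lt_iff hTbdd hTne).1 h1
    have hφx : φ < x := lt_of_le_of_ne (hφle x hxT) (by rintro rfl; exact hc hxT)
    obtain ⟨y, hyT, hyx⟩ := (csInf_lt_iff hTbdd hTne).1 hφx
    have hy0 : (0:ℝ) < y := lt_trans one_pos hyT.2
    have hyinv : (0:ℝ) < y⁻¹ := inv_pos.2 hy0
    have hyy : y * y⁻¹ = 1 := mul_inv_cancel₀ (ne_of_gt hy0)
    have hxy : x * y⁻¹ ∈ G := hmul _ _ hxT.1 (hGinv _ hyT.1)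
    have h1xy : 1 < x * y⁻¹ := by nlinarith
    have hφy : φ ≤ y := hφle y hyT
    have h2xy : x * y⁻¹ < 5/2 := by
      nlinarith [mul_pos (sub_pos.2 hx2) hyinv, mul_nonneg (sub_nonneg.2 hφy) (le_of_lt hyinv)]
    linarith [hgap _ hxy h1xy]
  have hpowmem : ∀ n : ℤ, φ ^ n ∈ G := by
    have hnat : ∀ k : ℕ, φ ^ k ∈ G := by
      intro k; induction k with
      | zero => simpa using hone
      | succ k ih => rw [pow_succ]; exact hmul _ _ ih hφT.1
    intro n
    rcases Int.eq_nat_or_neg n with ⟨m, rfl | rfl⟩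
    · rw [zpow_natCast]; exact hnat m
    · rw [zpow_neg, zpow_natCast]; exact hGinv _ (hnat m)
  have hGeq : G = {r : ℝ | ∃ n : ℤ, r = φ ^ n} := by
    ext g
    constructor
    · intro hg
      have hgpos : 0 < g := hGpos g hg
      obtain ⟨n, hn1, hn2⟩ := exists_mem_Ico_zpow hgpos hφ1
      refine ⟨n, ?_⟩
      have hmem : g * (φ ^ n)⁻¹ ∈ G := hmul _ _ hg (hGinv _ (hpowmem n))
      have hφn : (0:ℝ) < φ ^ n := zpow_pos hφ0 n
      have hcan : φ ^ n * (φ ^ n)⁻¹ = 1 := mul_inv_cancel₀ (ne_of_gt hφn)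
      have hφninv : (0:ℝ) < (φ ^ n)⁻¹ := inv_pos.2 hφn
      have h1le : 1 ≤ g * (φ^n)⁻¹ := by nlinarith [mul_le_mul_of_nonneg_right hn1 (le_of_lt hφninv)]
      rcases eq_or_lt_of_le h1le with heq | hlt
      · rw [eq_comm, mul_inv_eq_one₀ (ne_of_gt hφn)] at heq
        exact heq
      · exfalso
        have hn2' : g < φ ^ n * φ := by rw [← zpow_add_one₀ (ne_of_gt hφ0)]; exact hn2
        have hlt2 : g * (φ^n)⁻¹ < φ := by nlinarith [mul_lt_mul_of_pos_right hn2' hφninv]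
        have : φ ≤ g * (φ^n)⁻¹ := hφle _ ⟨hmem, hlt⟩
        linarith
    · rintro ⟨n, rfl⟩; exact hpowmem n
  refine ⟨φ, hφ1, ?_, ?_, ?_, hGeq, ?_⟩
  · intro A _; exact mderiv_pos hirr A
  · intro A B hA hB; exact mderiv_mul hirr hA hB
  · intro A hA; exact kernel_lemma hirr A hA
  · intro B hB
    have hkey : {r : ℝ | ∃ A : SL2Z, IsFixedPt A (mobius B s) ∧ mobiusDeriv A (mobius B s) = r} = G := by
      ext r
      constructor
      · rintro ⟨A', hA', rfl⟩
        obtain ⟨hfix, hder⟩ := transfer (irrational_mobius hirr) B⁻¹ A' hA'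
        rw [inv_inv, mobius_inv hirr] at hfix hder
        exact ⟨_, hfix, hder⟩
      · rintro ⟨A, hA, rfl⟩
        obtain ⟨hfix, hder⟩ := transfer hirr B A hA
        exact ⟨_, hfix, hder⟩
    rw [hkey, hGeq]

end
end

section
/- Let H be a subgroup of G̃ generated by a finite set S, let s ∈ ℝ, and let O = {h(s) : h ∈ H} be the orbit of s. Then the Schreier graph of H on O with respect to S is amenable: for every ε > 0 there exists a finite nonempty subset F ⊆ O such that the boundary ∂F = {y ∈ O ∖ F : there exists h ∈ S with h(y) ∈ F or h⁻¹(y) ∈ F} satisfies card(∂F) ≤ ε · card(F). -/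
noncomputable section

theorem Equiv.Perm.apply_inv_self {α : Type*} (f : Equiv.Perm α) (x : α) : f (f⁻¹ x) = x :=
  Equiv.apply_symm_apply f x

theorem Equiv.Perm.inv_apply_self {α : Type*} (f : Equiv.Perm α) (x : α) : f⁻¹ (f x) = x :=
  Equiv.symm_apply_apply f x

open Finset in
/-- Finset of values `∑ c_h * t h` over coefficient vectors bounded by `K`. -/
def VK (t : Equiv.Perm ℝ → ℝ) : List (Equiv.Perm ℝ) → ℕ → Finset ℝ
  | [], _ => {0}
  | h :: l, K => ((Finset.Icc (-(K:ℤ)) (K:ℤ)) ×ˢ VK t l K).image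
      (fun p => (p.1 : ℝ) * t h + p.2)

def Tsum (t : Equiv.Perm ℝ → ℝ) (l : List (Equiv.Perm ℝ)) : ℝ :=
  (l.map (fun h => |t h|)).sum

lemma Tsum_nonneg (t : Equiv.Perm ℝ → ℝ) (l : List (Equiv.Perm ℝ)) : 0 ≤ Tsum t l := by
  induction l with
  | nil => simp [Tsum]
  | cons h l ih => simp only [Tsum, List.map_cons, List.sum_cons]; positivity

lemma VK_zero_mem (t : Equiv.Perm ℝ → ℝ) (l : List (Equiv.Perm ℝ)) (K : ℕ) :
    (0:ℝ) ∈ VK t l K := by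
  induction l with
  | nil => simp [VK]
  | cons h l ih =>
      simp only [VK, Finset.mem_image]
      exact ⟨((0:ℤ), (0:ℝ)), by simp [ih], by simp⟩

lemma VK_mono (t : Equiv.Perm ℝ → ℝ) (l : List (Equiv.Perm ℝ)) (K : ℕ) :
    VK t l K ⊆ VK t l (K+1) := by
  induction l with
  | nil => simp [VK]
  | cons h l ih =>
      intro v hv
      simp only [VK, Finset.mem_image, Finset.mem_product] at hv ⊢
      obtain ⟨⟨c, w⟩, ⟨hc, hw⟩, rfl⟩ := hv
      refine ⟨⟨c, w⟩, ⟨?_, ih hw⟩, rfl⟩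
      simp only [Finset.mem_Icc] at hc ⊢
      push_cast
      omega

lemma VK_card (t : Equiv.Perm ℝ → ℝ) (l : List (Equiv.Perm ℝ)) (K : ℕ) :
    (VK t l K).card ≤ (2*K+1)^l.length := by
  induction l with
  | nil => simp [VK]
  | cons h l ih =>
      calc (VK t (h::l) K).card ≤ ((Finset.Icc (-(K:ℤ)) (K:ℤ)) ×ˢ VK t l K).card :=
            Finset.card_image_le
        _ = (Finset.Icc (-(K:ℤ)) (K:ℤ)).card * (VK t l K).card := Finset.card_product _ _
        _ ≤ (2*K+1) * (2*K+1)^l.length := by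
            apply Nat.mul_le_mul _ ih
            rw [Int.card_Icc]
            simp only [Int.toNat_le]
            push_cast; omega
        _ = (2*K+1)^(h::l).length := by rw [List.length_cons, pow_succ]; ring

lemma VK_abs_le (t : Equiv.Perm ℝ → ℝ) (l : List (Equiv.Perm ℝ)) (K : ℕ) (v : ℝ)
    (hv : v ∈ VK t l K) : |v| ≤ K * Tsum t l := by
  induction l generalizing v with
  | nil => simp only [VK, Finset.mem_singleton] at hv; simp [hv, Tsum, Tsum_nonneg]
  | cons h l ih =>
      simp only [VK, Finset.mem_image, Finset.mem_product, Finset.mem_Icc] at hv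
      obtain ⟨⟨c, w⟩, ⟨hc, hw⟩, rfl⟩ := hv
      have h1 : |(c:ℝ)| ≤ (K:ℝ) := by
        rw [abs_le]; constructor <;> [exact_mod_cast hc.1; exact_mod_cast hc.2]
      have h2 := ih w hw
      have : Tsum t (h::l) = |t h| + Tsum t l := by simp [Tsum]
      rw [this]
      calc |(c:ℝ) * t h + w| ≤ |(c:ℝ)| * |t h| + |w| := by
            refine (abs_add_le _ _).trans ?_; rw [abs_mul]
        _ ≤ (K:ℝ) * |t h| + K * Tsum t l := by
            have := abs_nonneg (t h)
            nlinarith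
        _ = K * (|t h| + Tsum t l) := by ring

lemma VK_add_mem (t : Equiv.Perm ℝ → ℝ) (l : List (Equiv.Perm ℝ)) (K : ℕ)
    (h : Equiv.Perm ℝ) (hh : h ∈ l) (v : ℝ) (hv : v ∈ VK t l K) :
    v + t h ∈ VK t l (K+1) ∧ v - t h ∈ VK t l (K+1) := by
  induction l generalizing v with
  | nil => simp at hh
  | cons h₀ l ih =>
      simp only [VK, Finset.mem_image, Finset.mem_product, Finset.mem_Icc] at hv
      obtain ⟨⟨c, w⟩, ⟨hc, hw⟩, rfl⟩ := hv
      rcases List.mem_cons.mp hh with heq | htl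
      · subst heq
        constructor
        · refine Finset.mem_image.mpr ⟨⟨c+1, w⟩, ?_, by push_cast; ring⟩
          simp only [Finset.mem_product, Finset.mem_Icc]
          exact ⟨by push_cast; omega, VK_mono t l K hw⟩
        · refine Finset.mem_image.mpr ⟨⟨c-1, w⟩, ?_, by push_cast; ring⟩
          simp only [Finset.mem_product, Finset.mem_Icc]
          exact ⟨by push_cast; omega, VK_mono t l K hw⟩
      · obtain ⟨ih1, ih2⟩ := ih htl w hw
        constructor
        · refine Finset.mem_image.mpr ⟨⟨c, w + t h⟩, ?_, by push_cast; ring⟩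
          simp only [Finset.mem_product, Finset.mem_Icc]
          exact ⟨by push_cast; omega, ih1⟩
        · refine Finset.mem_image.mpr ⟨⟨c, w - t h⟩, ?_, by push_cast; ring⟩
          simp only [Finset.mem_product, Finset.mem_Icc]
          exact ⟨by push_cast; omega, ih2⟩

lemma exists_slow_growth (m : ℕ) (ε : ℝ) (hε : 0 < ε) (f : ℕ → ℕ)
    (hf1 : 1 ≤ f 0) (hpoly : ∀ K, f K ≤ (2*K+1)^m) :
    ∃ K, (f (K+1) : ℝ) ≤ (1+ε) * f K := by
  by_contra hcon
  push_neg at hcon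
  have hgrow : ∀ K, (1+ε)^K ≤ (f K : ℝ) := by
    intro K
    induction K with
    | zero => simpa using (by exact_mod_cast hf1 : (1:ℝ) ≤ f 0)
    | succ K ih =>
        have h1 : (1+ε)^(K+1) = (1+ε) * (1+ε)^K := by ring
        have h2 : (1+ε) * (1+ε)^K ≤ (1+ε) * f K := by
          apply mul_le_mul_of_nonneg_left ih; linarith
        linarith [hcon K]
  have hlim := tendsto_pow_const_div_const_pow_of_one_lt m
    (by linarith : (1:ℝ) < 1+ε)
  have hev : ∀ᶠ (k:ℕ) in Filter.atTop, (k:ℝ)^m / (1+ε)^k < 1/(3:ℝ)^m :=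
    hlim.eventually_lt_const (by positivity)
  obtain ⟨k, hk1, hk⟩ := (hev.and (Filter.eventually_ge_atTop 1)).exists
  have hpos : (0:ℝ) < (1+ε)^k := by positivity
  have h4 : ((2*k+1:ℕ):ℝ) ≤ 3 * (k:ℝ) := by
    have hk' : (1:ℝ) ≤ (k:ℝ) := by exact_mod_cast hk
    push_cast
    linarith
  have h3 : ((f k : ℝ)) ≤ (3 * (k:ℝ))^m := by
    calc ((f k : ℝ)) ≤ (((2*k+1)^m : ℕ):ℝ) := by exact_mod_cast hpoly k
      _ = ((2*k+1:ℕ):ℝ)^m := by push_cast; ring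
      _ ≤ (3 * (k:ℝ))^m := by
          apply pow_le_pow_left₀ (by positivity) h4
  have h5 : (3 * (k:ℝ))^m = 3^m * (k:ℝ)^m := by rw [mul_pow]
  have h6 : (k:ℝ)^m * (3:ℝ)^m < (1+ε)^k := by
    have h7 : (k:ℝ)^m < (1+ε)^k * (1/(3:ℝ)^m) := by
      rw [div_lt_iff₀ hpos] at hk1; linarith
    have h8 : (0:ℝ) < (3:ℝ)^m := by positivity
    calc (k:ℝ)^m * (3:ℝ)^m < ((1+ε)^k * (1/(3:ℝ)^m)) * (3:ℝ)^m := by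
          apply mul_lt_mul_of_pos_right h7 h8
      _ = (1+ε)^k := by field_simp
  have := hgrow k
  nlinarith



lemma mu_identity (a b c d σ : ℝ) (hdet : a*d - b*c = 1)
    (hfix : a*σ + b = σ*(c*σ+d)) : (a - σ*c)*(c*σ+d) = 1 := by
  linear_combination hdet + c*hfix

lemma affine_step (a b c d σ y : ℝ) (hdet : a*d - b*c = 1)
    (hfix : a*σ + b = σ*(c*σ+d)) (hden : c*y + d ≠ 0) (hlt : y < σ) :
    1/(σ - (a*y+b)/(c*y+d)) = (c*σ+d)^2 * (1/(σ-y)) - c*(c*σ+d) := by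
  have hμ := mu_identity a b c d σ hdet hfix
  have hμne : c*σ + d ≠ 0 := right_ne_zero_of_mul_eq_one hμ
  have haσc : a - σ*c ≠ 0 := left_ne_zero_of_mul_eq_one hμ
  have hσy : σ - y ≠ 0 := sub_ne_zero.mpr (ne_of_gt hlt)
  have e1 : σ - (a*y+b)/(c*y+d) = ((a - σ*c)*(σ-y))/(c*y+d) := by
    rw [eq_div_iff hden, sub_mul, div_mul_cancel₀ _ hden]
    linear_combination -hfix
  have e2 : (c*σ+d)^2 * (1/(σ-y)) - c*(c*σ+d) = ((c*σ+d)*(c*y+d))/(σ-y) := by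
    field_simp
    ring
  rw [e1, one_div_div, e2, div_eq_div_iff (mul_ne_zero haσc hσy) hσy]
  linear_combination (-(c*y+d)*(σ-y))*hμ

lemma int_linear_zero (e f : ℤ) (σ : ℝ) (hirr : Irrational σ)
    (h : (e:ℝ)*σ + f = 0) : e = 0 ∧ f = 0 := by
  by_cases he : e = 0
  · refine ⟨he, ?_⟩
    subst he
    simp at h
    exact_mod_cast h
  · exfalso
    apply hirr.ne_rat ((-f : ℚ)/(e : ℚ))
    have he' : (e:ℝ) ≠ 0 := Int.cast_ne_zero.mpr he
    push_cast
    rw [eq_div_iff he']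
    linarith

lemma second_root (a b c d σ τ : ℝ) (hτ : c*τ = a - d - c*σ)
    (hfix : a*σ + b = σ*(c*σ+d)) : a*τ + b = τ*(c*τ+d) := by
  linear_combination (σ - τ)*hτ + hfix

lemma vieta_mul (a b c d σ τ : ℝ) (hdet : a*d - b*c = 1) (hne : σ ≠ τ)
    (hfix : a*σ + b = σ*(c*σ+d)) (hfix' : a*τ + b = τ*(c*τ+d)) :
    (c*σ+d)*(c*τ+d) = 1 := by
  have hsum : c*(σ+τ) = a - d := by
    have h1 : (σ - τ)*(c*(σ+τ) - (a-d)) = 0 := by linear_combination hfix' - hfix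
    have h2 : σ - τ ≠ 0 := sub_ne_zero.mpr hne
    have := mul_eq_zero.mp h1
    rcases this with h | h
    · exact absurd h h2
    · linarith
  have hprod' : c*(σ*τ) = -b := by linear_combination σ*hsum + hfix
  linear_combination c*hprod' + d*hsum + hdet

lemma core (S : Finset (Equiv.Perm ℝ)) (O : Set ℝ)
    (hO : ∀ h ∈ S, ∀ y ∈ O, h y ∈ O ∧ (h⁻¹ : Equiv.Perm ℝ) y ∈ O)
    (ψ : ℝ → ℝ) (Z Z' : Set ℝ) (t : Equiv.Perm ℝ → ℝ) (R₁ : ℝ)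
    (hZ'Z : Z' ⊆ Z)
    (hinj : Set.InjOn ψ (O ∩ Z))
    (hZ' : ∀ y ∈ Z, R₁ ≤ ψ y → y ∈ Z')
    (hstep : ∀ h ∈ S, ∀ y ∈ Z', h y ∈ Z ∧ ψ (h y) = ψ y + t h ∧
        (h⁻¹ : Equiv.Perm ℝ) y ∈ Z ∧ ψ ((h⁻¹ : Equiv.Perm ℝ) y) = ψ y - t h)
    (hy₀ : ∀ B : ℝ, ∃ y, y ∈ O ∧ y ∈ Z ∧ B ≤ ψ y) :
    ∀ ε : ℝ, 0 < ε →
      ∃ F : Set ℝ, F.Finite ∧ F.Nonempty ∧ F ⊆ O ∧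
        ((({y : ℝ | (y ∈ O \ F) ∧ ∃ h ∈ S, h y ∈ F ∨ (h⁻¹ : Equiv.Perm ℝ) y ∈ F}).ncard : ℝ)
          ≤ ε * F.ncard) := by
  intro ε hε
  set l := S.toList with hl
  have hlmem : ∀ h : Equiv.Perm ℝ, h ∈ l ↔ h ∈ S := fun h => Finset.mem_toList
  have hTl : 0 ≤ Tsum t l := Tsum_nonneg t l
  obtain ⟨K, hK⟩ := exists_slow_growth l.length ε hε (fun K => (VK t l K).card)
      (Finset.card_pos.mpr ⟨0, VK_zero_mem t l 0⟩) (fun K => VK_card t l K)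
  obtain ⟨y₀, hy₀O, hy₀Z, hy₀ψ⟩ := hy₀ (R₁ + (K+1) * Tsum t l)
  -- points whose ψ-offset from y₀ is small are in the inner zone
  have hZmem : ∀ (v : ℝ), |v| ≤ ((K:ℝ)+1) * Tsum t l → ∀ y, y ∈ Z → ψ y = ψ y₀ + v →
      y ∈ Z' := by
    intro v hv y hyZ hψ
    apply hZ' y hyZ
    have h1 := (abs_le.mp hv).1
    rw [hψ]
    linarith
  -- every value in `VK t l K` is realized by an orbit point in the zone
  have reach : ∀ l₂ : List (Equiv.Perm ℝ), (∀ h ∈ l₂, h ∈ S) → Tsum t l₂ ≤ Tsum t l →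
      ∀ v ∈ VK t l₂ K, ∃ y, y ∈ O ∧ y ∈ Z ∧ ψ y = ψ y₀ + v := by
    intro l₂
    induction l₂ with
    | nil =>
        intro _ _ v hv
        simp only [VK, Finset.mem_singleton] at hv
        exact ⟨y₀, hy₀O, hy₀Z, by simp [hv]⟩
    | cons h l₂ ih =>
        intro hmem hTs v hv
        have hhS : h ∈ S := hmem h List.mem_cons_self
        have hTs₂ : Tsum t l₂ ≤ Tsum t l := by
          refine le_trans ?_ hTs
          have : Tsum t (h::l₂) = |t h| + Tsum t l₂ := by simp [Tsum]
          rw [this]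
          have := abs_nonneg (t h)
          linarith
        simp only [VK, Finset.mem_image, Finset.mem_product, Finset.mem_Icc] at hv
        obtain ⟨⟨c, w⟩, ⟨hc, hw⟩, rfl⟩ := hv
        obtain ⟨y', hy'O, hy'Z, hy'ψ⟩ :=
          ih (fun g hg => hmem g (List.mem_cons_of_mem _ hg)) hTs₂ w hw
        simp only [Finset.mem_Icc] at hc
        -- induction on |c'|
        have main : ∀ n : ℕ, ∀ c' : ℤ, c'.natAbs = n → -(K:ℤ) ≤ c' → c' ≤ K →
            ∃ y, y ∈ O ∧ y ∈ Z ∧ ψ y = ψ y₀ + ((c':ℝ) * t h + w) := by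
          intro n
          induction n with
          | zero =>
              intro c' hc' _ _
              have : c' = 0 := by omega
              subst this
              exact ⟨y', hy'O, hy'Z, by rw [hy'ψ]; push_cast; ring⟩
          | succ n ihn =>
              intro c' hc' hcl hcr
              have hmemV : ∀ c'' : ℤ, -(K:ℤ) ≤ c'' → c'' ≤ K →
                  ((c'':ℝ) * t h + w) ∈ VK t (h::l₂) K := by
                intro c'' h1 h2
                refine Finset.mem_image.mpr ⟨⟨c'', w⟩, ?_, rfl⟩
                simp only [Finset.mem_product, Finset.mem_Icc]
                exact ⟨⟨h1, h2⟩, hw⟩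
              have habs : ∀ c'' : ℤ, -(K:ℤ) ≤ c'' → c'' ≤ K →
                  |(c'':ℝ) * t h + w| ≤ ((K:ℝ)+1) * Tsum t l := by
                intro c'' h1 h2
                have := VK_abs_le t (h::l₂) K _ (hmemV c'' h1 h2)
                have h3 : (K:ℝ) * Tsum t (h::l₂) ≤ ((K:ℝ)+1) * Tsum t l := by
                  have h4 : (K:ℝ) * Tsum t (h::l₂) ≤ (K:ℝ) * Tsum t l := by
                    apply mul_le_mul_of_nonneg_left hTs (by positivity)
                  nlinarith
                linarith
              rcases lt_trichotomy c' 0 with hneg | hzero | hpos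
              · obtain ⟨y'', hy''O, hy''Z, hy''ψ⟩ := ihn (c'+1) (by omega) (by omega) (by omega)
                have hy''Z' : y'' ∈ Z' :=
                  hZmem _ (habs (c'+1) (by omega) (by omega)) y'' hy''Z hy''ψ
                obtain ⟨_, _, hinvZ, hinvψ⟩ := hstep h hhS y'' hy''Z'
                refine ⟨(h⁻¹ : Equiv.Perm ℝ) y'', (hO h hhS y'' hy''O).2, hinvZ, ?_⟩
                rw [hinvψ, hy''ψ]; push_cast; ring
              · subst hzero
                exact ⟨y', hy'O, hy'Z, by rw [hy'ψ]; push_cast; ring⟩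
              · obtain ⟨y'', hy''O, hy''Z, hy''ψ⟩ := ihn (c'-1) (by omega) (by omega) (by omega)
                have hy''Z' : y'' ∈ Z' :=
                  hZmem _ (habs (c'-1) (by omega) (by omega)) y'' hy''Z hy''ψ
                obtain ⟨hstZ, hstψ, _, _⟩ := hstep h hhS y'' hy''Z'
                refine ⟨h y'', (hO h hhS y'' hy''O).1, hstZ, ?_⟩
                rw [hstψ, hy''ψ]; push_cast; ring
        exact main c.natAbs c rfl hc.1 hc.2
  -- now define F and E
  classical
  set Φ : Finset ℝ := (VK t l K).image (fun v => ψ y₀ + v) with hΦ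
  set ΦE : Finset ℝ := (VK t l (K+1)).image (fun v => ψ y₀ + v) with hΦE
  set F : Set ℝ := {y | y ∈ O ∧ y ∈ Z ∧ ψ y ∈ Φ} with hF
  set E : Set ℝ := {y | y ∈ O ∧ y ∈ Z ∧ ψ y ∈ ΦE} with hE
  have hFO : F ⊆ O := fun y hy => hy.1
  have hFOZ : F ⊆ O ∩ Z := fun y hy => ⟨hy.1, hy.2.1⟩
  have hEOZ : E ⊆ O ∩ Z := fun y hy => ⟨hy.1, hy.2.1⟩
  have hΦsub : Φ ⊆ ΦE := Finset.image_subset_image (VK_mono t l K)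
  have hFE : F ⊆ E := fun y hy => ⟨hy.1, hy.2.1, hΦsub hy.2.2⟩
  have hEfin : E.Finite := by
    apply Set.Finite.of_finite_image _ (hinj.mono hEOZ)
    apply Set.Finite.subset (ΦE.finite_toSet)
    rintro x ⟨y, hy, rfl⟩
    exact hy.2.2
  have hFfin : F.Finite := hEfin.subset hFE
  have hy₀F : y₀ ∈ F := by
    refine ⟨hy₀O, hy₀Z, ?_⟩
    exact Finset.mem_image.mpr ⟨0, VK_zero_mem t l K, by ring⟩
  -- ψ image of F is all of Φ
  have himgF : ψ '' F = ↑Φ := by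
    apply Set.Subset.antisymm
    · rintro x ⟨y, hy, rfl⟩; exact hy.2.2
    · rintro x hx
      obtain ⟨v, hv, rfl⟩ := Finset.mem_image.mp (Finset.mem_coe.mp hx)
      obtain ⟨y, hyO, hyZ, hyψ⟩ := reach l (fun h hh => (hlmem h).mp hh) le_rfl v hv
      exact ⟨y, ⟨hyO, hyZ, by rw [hyψ]; exact Finset.mem_image_of_mem _ hv⟩, hyψ⟩
  have hFcard : F.ncard = Φ.card := by
    rw [← Set.ncard_image_of_injOn (hinj.mono hFOZ), himgF, Set.ncard_coe_finset]
  have hΦcard : Φ.card = (VK t l K).card :=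
    Finset.card_image_of_injective _ (add_right_injective _)
  have hΦEcard : ΦE.card = (VK t l (K+1)).card :=
    Finset.card_image_of_injective _ (add_right_injective _)
  -- members of F are in the inner zone Z'
  have hFZ' : ∀ y ∈ F, y ∈ Z' := by
    rintro y ⟨hyO, hyZ, hyψ⟩
    obtain ⟨v, hv, hveq⟩ := Finset.mem_image.mp hyψ
    refine hZmem v ?_ y hyZ hveq.symm
    have := VK_abs_le t l K v hv
    nlinarith [Tsum_nonneg t l]
  -- boundary is inside E \ F
  have hbd : {y : ℝ | (y ∈ O \ F) ∧ ∃ h ∈ S, h y ∈ F ∨ (h⁻¹ : Equiv.Perm ℝ) y ∈ F} ⊆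
      E \ F := by
    rintro y ⟨⟨hyO, hyF⟩, h, hhS, hcase⟩
    refine ⟨?_, hyF⟩
    rcases hcase with hyF' | hyF'
    · have hxZ' : h y ∈ Z' := hFZ' _ hyF'
      obtain ⟨_, _, hinvZ, hinvψ⟩ := hstep h hhS (h y) hxZ'
      have heq : (h⁻¹ : Equiv.Perm ℝ) (h y) = y := Equiv.Perm.inv_apply_self h y
      obtain ⟨v, hv, hveq⟩ := Finset.mem_image.mp hyF'.2.2
      refine ⟨hyO, heq ▸ hinvZ, ?_⟩
      have : ψ y = ψ y₀ + (v - t h) := by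
        rw [← heq, hinvψ, ← hveq]; ring
      rw [this]
      exact Finset.mem_image_of_mem _ ((VK_add_mem t l K h ((hlmem h).mpr hhS) v hv).2)
    · have hxZ' : (h⁻¹ : Equiv.Perm ℝ) y ∈ Z' := hFZ' _ hyF'
      obtain ⟨hstZ, hstψ, _, _⟩ := hstep h hhS _ hxZ'
      have heq : h ((h⁻¹ : Equiv.Perm ℝ) y) = y := Equiv.Perm.apply_inv_self h y
      obtain ⟨v, hv, hveq⟩ := Finset.mem_image.mp hyF'.2.2
      refine ⟨hyO, heq ▸ hstZ, ?_⟩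
      have : ψ y = ψ y₀ + (v + t h) := by
        rw [← heq, hstψ, ← hveq]; ring
      rw [this]
      exact Finset.mem_image_of_mem _ ((VK_add_mem t l K h ((hlmem h).mpr hhS) v hv).1)
  -- count E \ F
  have hEFimg : ψ '' (E \ F) ⊆ ↑(ΦE \ Φ) := by
    rintro x ⟨y, ⟨hyE, hyF⟩, rfl⟩
    simp only [Finset.coe_sdiff, Set.mem_diff, Finset.mem_coe]
    refine ⟨hyE.2.2, fun hmem => hyF ⟨hyE.1, hyE.2.1, hmem⟩⟩
  have hEFcard : (E \ F).ncard ≤ (ΦE \ Φ).card := by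
    have h1 : (E \ F).ncard = (ψ '' (E \ F)).ncard :=
      (Set.ncard_image_of_injOn (hinj.mono (fun y hy => hEOZ hy.1))).symm
    rw [h1, ← Set.ncard_coe_finset (ΦE \ Φ)]
    exact Set.ncard_le_ncard hEFimg (ΦE \ Φ).finite_toSet
  have hsdiff : (ΦE \ Φ).card = ΦE.card - Φ.card := Finset.card_sdiff_of_subset hΦsub
  have hΦle : Φ.card ≤ ΦE.card := Finset.card_le_card hΦsub
  refine ⟨F, hFfin, ⟨y₀, hy₀F⟩, hFO, ?_⟩
  have hbdcard : ({y : ℝ | (y ∈ O \ F) ∧ ∃ h ∈ S, h y ∈ F ∨ (h⁻¹ : Equiv.Perm ℝ) y ∈ F}).ncard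
      ≤ (E \ F).ncard := Set.ncard_le_ncard hbd (hEfin.subset Set.diff_subset)
  have hfinal : ((ΦE.card : ℝ) - Φ.card) ≤ ε * Φ.card := by
    have := hK
    simp only [hΦcard, hΦEcard]
    push_cast
    nlinarith [hK]
  calc (({y : ℝ | (y ∈ O \ F) ∧ ∃ h ∈ S, h y ∈ F ∨ (h⁻¹ : Equiv.Perm ℝ) y ∈ F}).ncard : ℝ)
      ≤ ((E \ F).ncard : ℝ) := by exact_mod_cast hbdcard
    _ ≤ ((ΦE \ Φ).card : ℝ) := by exact_mod_cast hEFcard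
    _ = (ΦE.card : ℝ) - Φ.card := by rw [hsdiff]; push_cast [hΦle]; ring
    _ ≤ ε * Φ.card := hfinal
    _ = ε * F.ncard := by rw [hFcard]

/-- `f` coincides on `S` with the (everywhere-defined) Möbius action of a single
element of SL(2, ℤ). -/
def MobiusLikeOn (f : ℝ → ℝ) (S : Set ℝ) : Prop :=
  ∃ A : SL2Z, ∀ y ∈ S, mobiusDefinedAt A y ∧ f y = mobius A y

/-- Membership in the group `G̃` of piecewise-`PSL₂(ℤ)` homeomorphisms of the line:
a strictly increasing bijection of `ℝ` which, off a finite set `B`, coincides on each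
connected component of `ℝ ∖ B` with the Möbius action of an element of SL(2, ℤ),
and which equals an integer translation near infinity. -/
def InGTilde (f : Equiv.Perm ℝ) : Prop :=
  StrictMono f ∧
  (∃ B : Finset ℝ, ∀ x : ℝ, x ∉ B →
    MobiusLikeOn f (connectedComponentIn ((↑B : Set ℝ)ᶜ) x)) ∧
  ∃ (n : ℤ) (M : ℝ), ∀ x : ℝ, M ≤ |x| → f x = x + (n : ℝ)

/-- `x` is a break point of `f` if `f` does not coincide with the Möbius action of a
single element of SL(2, ℤ) on any neighbourhood of `x`. -/
def IsBreakPt (f : ℝ → ℝ) (x : ℝ) : Prop :=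
  ¬ ∃ U ∈ nhds x, MobiusLikeOn f U

/-- Membership in Monod's group `H(ℤ)`: an element of `G̃` all of whose break points
lie in `P_ℤ`. -/
def InHZ (f : Equiv.Perm ℝ) : Prop :=
  InGTilde f ∧ ∀ x : ℝ, IsBreakPt f x → x ∈ PZ

/-- The orbit of `s` under the Möbius action of SL(2, ℤ) (where defined). -/
def orbitOf (s : ℝ) : Set ℝ :=
  {x | ∃ A : SL2Z, mobiusDefinedAt A s ∧ x = mobius A s}


/-- The Schreier graph on the orbit of any `s ∈ ℝ` of a subgroup of `G̃` generated by
a finite set `S` is amenable: for every `ε > 0` there is a finite nonempty `F` inside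
the orbit whose boundary `∂F` satisfies `#∂F ≤ ε · #F`. -/
theorem schreier_graph_amenable
    (S : Finset (Equiv.Perm ℝ)) (hS : ∀ h ∈ S, InGTilde h) (s : ℝ) :
    ∀ ε : ℝ, 0 < ε →
      ∃ F : Set ℝ, F.Finite ∧ F.Nonempty ∧
        F ⊆ {x : ℝ | ∃ h ∈ Subgroup.closure (↑S : Set (Equiv.Perm ℝ)),
          (h : Equiv.Perm ℝ) s = x} ∧
        (({y : ℝ | (y ∈ {x : ℝ | ∃ h ∈ Subgroup.closure (↑S : Set (Equiv.Perm ℝ)),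
              (h : Equiv.Perm ℝ) s = x} \ F) ∧
            ∃ h ∈ S, (h : Equiv.Perm ℝ) y ∈ F ∨ (h⁻¹ : Equiv.Perm ℝ) y ∈ F}).ncard : ℝ) ≤
          ε * F.ncard := by
  intro ε hε
  classical
  set O : Set ℝ := {x : ℝ | ∃ h ∈ Subgroup.closure (↑S : Set (Equiv.Perm ℝ)),
      (h : Equiv.Perm ℝ) s = x} with hOdef
  have hsO : s ∈ O := ⟨1, one_mem _, rfl⟩
  have hinv : ∀ h ∈ S, ∀ y ∈ O, h y ∈ O ∧ (h⁻¹ : Equiv.Perm ℝ) y ∈ O := by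
    rintro h hh y ⟨g, hg, rfl⟩
    constructor
    · exact ⟨h * g, mul_mem (Subgroup.subset_closure hh) hg, Equiv.Perm.mul_apply h g s⟩
    · exact ⟨h⁻¹ * g, mul_mem (inv_mem (Subgroup.subset_closure hh)) hg,
        Equiv.Perm.mul_apply h⁻¹ g s⟩
  by_cases hfin : O.Finite
  · -- finite orbit: take F = O
    refine ⟨O, hfin, ⟨s, hsO⟩, le_refl _, ?_⟩
    have hempty : {y : ℝ | (y ∈ O \ O) ∧ ∃ h ∈ S, h y ∈ O ∨ (h⁻¹ : Equiv.Perm ℝ) y ∈ O} = ∅ := by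
      ext y; simp
    rw [hempty]
    simp only [Set.ncard_empty, Nat.cast_zero]
    positivity
  -- translation data for each generator
  have hdata : ∀ h : Equiv.Perm ℝ, ∃ (n : ℤ) (C : ℝ), 0 ≤ C ∧ |(n:ℝ)| ≤ C ∧
      (h ∈ S → ∀ x : ℝ, C ≤ |x| → h x = x + n) := by
    intro h
    by_cases hh : h ∈ S
    · obtain ⟨-, -, n, M, hM⟩ := hS h hh
      refine ⟨n, max M |(n:ℝ)|, le_trans (abs_nonneg _) (le_max_right _ _),
        le_max_right _ _, fun _ x hx => hM x (le_trans (le_max_left _ _) hx)⟩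
    · exact ⟨0, 0, le_rfl, by simp, fun h' => absurd h' hh⟩
  choose nt Ct hCt0 hCtn hCt using hdata
  set M₀ : ℝ := ∑ h ∈ S, Ct h with hM₀def
  have hM₀0 : 0 ≤ M₀ := Finset.sum_nonneg (fun i _ => hCt0 i)
  have hCle : ∀ h ∈ S, Ct h ≤ M₀ := fun h hh =>
    Finset.single_le_sum (fun i (_ : i ∈ S) => hCt0 i) hh
  by_cases hba : BddAbove O
  case neg =>
    -- unbounded above
    refine core S O hinv id (Set.Ioi M₀) (Set.Ioi (2*M₀+1)) (fun h => (nt h : ℝ))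
      (2*M₀+2) ?_ ?_ ?_ ?_ ?_ ε hε
    · intro y hy
      simp only [Set.mem_Ioi] at hy ⊢
      linarith
    · exact Function.injective_id.injOn
    · intro y hy hR
      simp only [Set.mem_Ioi, id_eq] at hy hR ⊢
      linarith
    · intro h hh y hy
      simp only [Set.mem_Ioi] at hy
      have hCh := hCle h hh
      have hnh : |(nt h : ℝ)| ≤ M₀ := le_trans (hCtn h) hCh
      have hnh1 := (abs_le.mp hnh).1
      have hnh2 := (abs_le.mp hnh).2
      have h1 : h y = y + nt h := hCt h hh y (by rw [abs_of_pos (by linarith)]; linarith)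
      have hz : h (y - nt h) = (y - nt h) + nt h :=
        hCt h hh _ (by rw [abs_of_pos (by linarith)]; linarith)
      have hz' : h (y - nt h) = y := by rw [hz]; ring
      have hinv2 : (h⁻¹ : Equiv.Perm ℝ) y = y - nt h := by
        have h5 := Equiv.Perm.inv_apply_self h (y - nt h)
        rw [hz'] at h5; exact h5
      refine ⟨?_, ?_, ?_, ?_⟩
      · simp only [Set.mem_Ioi]; rw [h1]; linarith
      · simp only [id_eq]; rw [h1]
      · simp only [Set.mem_Ioi]; rw [hinv2]; linarith
      · simp only [id_eq]; rw [hinv2]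
    · intro B
      obtain ⟨y, hyO, hy⟩ := not_bddAbove_iff.mp hba (max B M₀)
      exact ⟨y, hyO, Set.mem_Ioi.mpr (lt_of_le_of_lt (le_max_right _ _) hy),
        le_of_lt (lt_of_le_of_lt (le_max_left _ _) hy)⟩
  by_cases hbb : BddBelow O
  case neg =>
    -- unbounded below
    refine core S O hinv (fun y => -y) (Set.Iio (-M₀)) (Set.Iio (-(2*M₀+1)))
      (fun h => -(nt h : ℝ)) (2*M₀+2) ?_ ?_ ?_ ?_ ?_ ε hε
    · intro y hy
      simp only [Set.mem_Iio] at hy ⊢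
      linarith
    · exact neg_injective.injOn
    · intro y hy hR
      have hR' : 2*M₀+2 ≤ -y := hR
      simp only [Set.mem_Iio] at hy ⊢
      linarith
    · intro h hh y hy
      simp only [Set.mem_Iio] at hy
      have hCh := hCle h hh
      have hnh : |(nt h : ℝ)| ≤ M₀ := le_trans (hCtn h) hCh
      have hnh1 := (abs_le.mp hnh).1
      have hnh2 := (abs_le.mp hnh).2
      have h1 : h y = y + nt h := hCt h hh y (by rw [abs_of_neg (by linarith)]; linarith)
      have hz : h (y - nt h) = (y - nt h) + nt h :=
        hCt h hh _ (by rw [abs_of_neg (by linarith)]; linarith)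
      have hz' : h (y - nt h) = y := by rw [hz]; ring
      have hinv2 : (h⁻¹ : Equiv.Perm ℝ) y = y - nt h := by
        have h5 := Equiv.Perm.inv_apply_self h (y - nt h)
        rw [hz'] at h5; exact h5
      refine ⟨?_, ?_, ?_, ?_⟩
      · simp only [Set.mem_Iio]; rw [h1]; linarith
      · rw [h1]; ring
      · simp only [Set.mem_Iio]; rw [hinv2]; linarith
      · rw [hinv2]; ring
    · intro B
      obtain ⟨y, hyO, hy⟩ := not_bddBelow_iff.mp hbb (min (-B) (-M₀))
      refine ⟨y, hyO, Set.mem_Iio.mpr (lt_of_lt_of_le hy (min_le_right _ _)), ?_⟩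
      have := lt_of_lt_of_le hy (min_le_left _ _)
      show B ≤ -y
      linarith
  -- bounded case
  set σ : ℝ := sSup O with hσdef
  have hOne : O.Nonempty := ⟨s, hsO⟩
  have hfix : ∀ h ∈ S, h σ = σ → True := fun _ _ _ => trivial
  by_cases hσO : σ ∈ O
  · -- the sup is attained: it is a global fixed point
    have hfixσ : ∀ h ∈ S, h σ = σ := by
      intro h hh
      have h1 : h σ ≤ σ := le_csSup hba (hinv h hh σ hσO).1
      have h2 : (h⁻¹ : Equiv.Perm ℝ) σ ≤ σ := le_csSup hba (hinv h hh σ hσO).2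
      have h3 : σ ≤ h σ := by
        have := (hS h hh).1.monotone h2
        rwa [Equiv.Perm.apply_inv_self] at this
      linarith
    refine ⟨{σ}, Set.finite_singleton σ, ⟨σ, rfl⟩, by simpa using hσO, ?_⟩
    have hempty : {y : ℝ | (y ∈ O \ {σ}) ∧ ∃ h ∈ S, h y ∈ ({σ} : Set ℝ) ∨
        (h⁻¹ : Equiv.Perm ℝ) y ∈ ({σ} : Set ℝ)} = ∅ := by
      ext y
      simp only [Set.mem_setOf_eq, Set.mem_diff, Set.mem_singleton_iff, Set.mem_empty_iff_false,
        iff_false, not_and, not_exists]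
      rintro ⟨hyO, hyne⟩ h hh
      push_neg
      constructor
      · intro hk
        exact hyne ((hS h hh).1.injective (by rw [hk, hfixσ h hh]))
      · intro hk
        apply hyne
        have : h ((h⁻¹ : Equiv.Perm ℝ) y) = h σ := by rw [hk]
        rwa [Equiv.Perm.apply_inv_self, hfixσ h hh] at this
    rw [hempty]
    simp only [Set.ncard_empty, Nat.cast_zero]
    positivity
  · -- the hard case: sup not attained
    have hSne : S.Nonempty := by
      rcases Finset.eq_empty_or_nonempty S with rfl | hne
      · exfalso
        apply hfin
        have hsub : O ⊆ {s} := by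
          rintro x ⟨g, hg, rfl⟩
          simp only [Finset.coe_empty, Subgroup.closure_empty, Subgroup.mem_bot] at hg
          subst hg
          simp
        exact (Set.finite_singleton s).subset hsub
      · exact hne
    have hOlt : ∀ y ∈ O, y < σ := fun y hy =>
      lt_of_le_of_ne (le_csSup hba hy) (fun h => hσO (h ▸ hy))
    have hnear : ∀ η : ℝ, 0 < η → ∃ y, y ∈ O ∧ σ - η < y ∧ y < σ := by
      intro η hη
      obtain ⟨y, hyO, hy⟩ := exists_lt_of_lt_csSup ⟨s, hsO⟩ (by linarith : σ - η < σ)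
      exact ⟨y, hyO, hy, hOlt y hyO⟩
    have hmono : ∀ h ∈ S, StrictMono h := fun h hh => (hS h hh).1
    have hcont : ∀ h ∈ S, Continuous h := by
      intro h hh
      have h1 := OrderIso.continuous (StrictMono.orderIsoOfSurjective h (hmono h hh) h.surjective)
      rwa [StrictMono.coe_orderIsoOfSurjective] at h1
    have himg : ∀ h ∈ S, h '' O = O := by
      intro h hh
      apply Set.Subset.antisymm
      · rintro x ⟨y, hy, rfl⟩
        exact (hinv h hh y hy).1
      · intro y hy
        exact ⟨(h⁻¹ : Equiv.Perm ℝ) y, (hinv h hh y hy).2, Equiv.Perm.apply_inv_self h y⟩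
    have hfixσ : ∀ h ∈ S, h σ = σ := by
      intro h hh
      have h1 := Monotone.map_csSup_of_continuousAt ((hcont h hh).continuousAt)
        (hmono h hh).monotone ⟨s, hsO⟩ hba
      rw [himg h hh] at h1
      exact h1
    have hfixσ' : ∀ h ∈ S, (h⁻¹ : Equiv.Perm ℝ) σ = σ := by
      intro h hh
      conv_lhs => rw [← hfixσ h hh]
      exact Equiv.Perm.inv_apply_self h σ
    -- extract the Möbius germ of each generator to the left of σ
    have hgermEx : ∀ h : Equiv.Perm ℝ, ∃ (A : SL2Z) (δ : ℝ), 0 < δ ∧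
        (h ∈ S → ∀ y ∈ Set.Ioo (σ - δ) σ, mobiusDefinedAt A y ∧ h y = mobius A y) := by
      intro h
      by_cases hh : h ∈ S
      swap
      · exact ⟨1, 1, one_pos, fun h' => absurd h' hh⟩
      obtain ⟨B, hB⟩ := (hS h hh).2.1
      set T := B.filter (fun b => b < σ) with hT
      set δ : ℝ := if hne : T.Nonempty then σ - T.max' hne else 1 with hδ
      have hδpos : 0 < δ := by
        rw [hδ]
        split_ifs with hne
        · have h1 := T.max'_mem hne
          have h2 : T.max' hne < σ := (Finset.mem_filter.mp h1).2
          linarith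
        · exact one_pos
      have hdisj : ∀ b ∈ B, b ∉ Set.Ioo (σ - δ) σ := by
        intro b hb hbmem
        obtain ⟨h1, h2⟩ := hbmem
        have hbT : b ∈ T := Finset.mem_filter.mpr ⟨hb, h2⟩
        have hne : T.Nonempty := ⟨b, hbT⟩
        have h3 : b ≤ T.max' hne := T.le_max' b hbT
        rw [hδ, dif_pos hne] at h1
        linarith
      set x₀ : ℝ := σ - δ/2 with hx₀
      have hx₀mem : x₀ ∈ Set.Ioo (σ - δ) σ := by
        constructor
        · rw [hx₀]; linarith
        · rw [hx₀]; linarith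
      have hx₀B : x₀ ∉ B := fun hmem => hdisj x₀ hmem hx₀mem
      obtain ⟨A, hA⟩ := hB x₀ hx₀B
      refine ⟨A, δ, hδpos, fun _ y hy => hA y ?_⟩
      have hsub : Set.Ioo (σ - δ) σ ⊆ (↑B : Set ℝ)ᶜ := by
        intro z hz hzB
        exact hdisj z (Finset.mem_coe.mp hzB) hz
      exact (isPreconnected_Ioo (a := σ - δ) (b := σ)).subset_connectedComponentIn
        hx₀mem hsub hy
    choose AA δδ hδδpos hAA using hgermEx
    set va : Equiv.Perm ℝ → ℝ := fun h => ((AA h 0 0 : ℤ) : ℝ) with hva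
    set vb : Equiv.Perm ℝ → ℝ := fun h => ((AA h 0 1 : ℤ) : ℝ) with hvb
    set vc : Equiv.Perm ℝ → ℝ := fun h => ((AA h 1 0 : ℤ) : ℝ) with hvc
    set vd : Equiv.Perm ℝ → ℝ := fun h => ((AA h 1 1 : ℤ) : ℝ) with hvd
    have hdet : ∀ h, va h * vd h - vb h * vc h = 1 := by
      intro h
      have h1 := (AA h).property
      rw [Matrix.det_fin_two] at h1
      show ((AA h 0 0 : ℤ):ℝ) * ((AA h 1 1 : ℤ):ℝ) - ((AA h 0 1 : ℤ):ℝ) * ((AA h 1 0 : ℤ):ℝ) = 1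
      exact_mod_cast h1
    have hmob : ∀ h ∈ S, ∀ y ∈ Set.Ioo (σ - δδ h) σ,
        (vc h * y + vd h ≠ 0) ∧ h y = (va h * y + vb h)/(vc h * y + vd h) := by
      intro h hh y hy
      obtain ⟨hdef, heq⟩ := hAA h hh y hy
      exact ⟨hdef, heq⟩
    have hAfix : ∀ h ∈ S, vc h * σ + vd h ≠ 0 ∧ va h * σ + vb h = σ * (vc h * σ + vd h) := by
      intro h hh
      have hδ := hδδpos h
      have hio : Set.Ioo (σ - δδ h) σ ∈ nhdsWithin σ (Set.Iio σ) :=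
        Ioo_mem_nhdsLT_of_mem ⟨by linarith, le_refl σ⟩
      have hhy : ∀ y ∈ Set.Ioo (σ - δδ h) σ, va h * y + vb h = h y * (vc h * y + vd h) := by
        intro y hy
        obtain ⟨hdef, heq⟩ := hmob h hh y hy
        rw [heq, div_mul_cancel₀ _ hdef]
      have l1 : Filter.Tendsto (fun y => va h * y + vb h) (nhdsWithin σ (Set.Iio σ))
          (nhds (va h * σ + vb h)) :=
        (((continuous_const.mul continuous_id).add continuous_const).tendsto σ).mono_left
          nhdsWithin_le_nhds
      have l2 : Filter.Tendsto (fun y => h y * (vc h * y + vd h)) (nhdsWithin σ (Set.Iio σ))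
          (nhds (σ * (vc h * σ + vd h))) := by
        apply Filter.Tendsto.mul
        · have h1 := ((hcont h hh).tendsto σ).mono_left
            (nhdsWithin_le_nhds (s := Set.Iio σ))
          rwa [hfixσ h hh] at h1
        · exact (((continuous_const.mul continuous_id).add continuous_const).tendsto σ).mono_left
            nhdsWithin_le_nhds
      have heq : va h * σ + vb h = σ * (vc h * σ + vd h) := by
        refine tendsto_nhds_unique (l1.congr' ?_) l2
        filter_upwards [hio] with y hy using hhy y hy
      refine ⟨?_, heq⟩
      intro h0
      rw [h0, mul_zero] at heq
      have hz : va h * vd h - vb h * vc h = 0 := by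
        linear_combination (va h) * h0 - (vc h) * heq
      have := hdet h
      linarith
    have hμ1 : ∀ h ∈ S, (va h - σ * vc h) * (vc h * σ + vd h) = 1 :=
      fun h hh => mu_identity _ _ _ _ _ (hdet h) (hAfix h hh).2
    set δm : ℝ := S.inf' hSne δδ with hδm
    have hδmpos : 0 < δm := by
      rw [hδm, Finset.lt_inf'_iff]
      exact fun h _ => hδδpos h
    have hδmle : ∀ h ∈ S, δm ≤ δδ h := fun h hh => Finset.inf'_le _ hh
    -- affine behaviour of 1/(σ - ·) under each generator
    have haffine : ∀ h ∈ S, ∀ y ∈ Set.Ioo (σ - δm) σ, h y < σ ∧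
        1/(σ - h y) = (vc h * σ + vd h)^2 * (1/(σ - y)) - vc h * (vc h * σ + vd h) := by
      intro h hh y hy
      have hy' : y ∈ Set.Ioo (σ - δδ h) σ := ⟨lt_of_le_of_lt (by linarith [hδmle h hh]) hy.1, hy.2⟩
      obtain ⟨hdef, heq⟩ := hmob h hh y hy'
      have hlt : h y < σ := by
        rw [← hfixσ h hh]
        exact hmono h hh hy.2
      refine ⟨hlt, ?_⟩
      rw [heq]
      exact affine_step _ _ _ _ _ _ (hdet h) (hAfix h hh).2 hdef hy.2
    -- inner zone construction
    have zone : ∀ δZ : ℝ, 0 < δZ → ∃ ρ', σ - δZ ≤ ρ' ∧ ρ' < σ ∧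
        ∀ h ∈ S, ∀ y ∈ Set.Ioo ρ' σ, h y ∈ Set.Ioo (σ - δZ) σ ∧
          (h⁻¹ : Equiv.Perm ℝ) y ∈ Set.Ioo (σ - δZ) σ := by
      intro δZ hδZ
      set ρ : ℝ := σ - δZ with hρ
      set ρ' : ℝ := max ρ (S.sup' hSne (fun h => max (h ρ) ((h⁻¹ : Equiv.Perm ℝ) ρ))) with hρ'
      have hρltσ : ρ < σ := by rw [hρ]; linarith
      have hρ'lt : ρ' < σ := by
        rw [hρ', max_lt_iff]
        refine ⟨hρltσ, ?_⟩
        rw [Finset.sup'_lt_iff]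
        intro h hh
        rw [max_lt_iff]
        constructor
        · rw [← hfixσ h hh]
          exact hmono h hh hρltσ
        · rw [← hfixσ' h hh]
          apply (hmono h hh).lt_iff_lt.mp
          rw [Equiv.Perm.apply_inv_self, Equiv.Perm.apply_inv_self]
          exact hρltσ
      refine ⟨ρ', le_max_left _ _, hρ'lt, ?_⟩
      intro h hh y hy
      have hsup : max (h ρ) ((h⁻¹ : Equiv.Perm ℝ) ρ) ≤ ρ' :=
        le_trans (Finset.le_sup' (f := fun g => max (g ρ) ((g⁻¹ : Equiv.Perm ℝ) ρ)) hh)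
          (le_max_right _ _)
      obtain ⟨hy1, hy2⟩ := hy
      refine ⟨⟨?_, ?_⟩, ?_, ?_⟩
      · have h1 : (h⁻¹ : Equiv.Perm ℝ) ρ < y :=
          lt_of_le_of_lt (le_trans (le_max_right _ _) hsup) hy1
        have h2 := hmono h hh h1
        rwa [Equiv.Perm.apply_inv_self] at h2
      · rw [← hfixσ h hh]
        exact hmono h hh hy2
      · have h1 : h ρ < y := lt_of_le_of_lt (le_trans (le_max_left _ _) hsup) hy1
        have h3 : h ρ < h ((h⁻¹ : Equiv.Perm ℝ) y) := by rwa [Equiv.Perm.apply_inv_self]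
        exact (hmono h hh).lt_iff_lt.mp h3
      · rw [← hfixσ' h hh]
        apply (hmono h hh).lt_iff_lt.mp
        rw [Equiv.Perm.apply_inv_self, Equiv.Perm.apply_inv_self]
        exact hy2
    by_cases hpar : ∀ h ∈ S, (vc h * σ + vd h)^2 = 1
    · -- all germs act as translations of 1/(σ - ·)
      obtain ⟨ρ', hρ'ge, hρ'lt, hzone⟩ := zone δm hδmpos
      set R₁ : ℝ := max (2/(σ - ρ')) 1 with hR₁
      have hR₁pos : 0 < R₁ := lt_of_lt_of_le one_pos (le_max_right _ _)
      refine core S O hinv (fun y => 1/(σ - y)) (Set.Ioo (σ - δm) σ) (Set.Ioo ρ' σ)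
        (fun h => -(vc h * (vc h * σ + vd h))) R₁ ?_ ?_ ?_ ?_ ?_ ε hε
      · intro y hy
        exact ⟨lt_of_le_of_lt (by linarith) hy.1, hy.2⟩
      · rintro y₁ ⟨-, hy₁⟩ y₂ ⟨-, hy₂⟩ heq
        simp only [one_div] at heq
        have heq2 := inv_injective heq
        have := hy₁.2
        have := hy₂.2
        linarith [heq2]
      · intro y hy hR
        have hR' : R₁ ≤ 1/(σ - y) := hR
        have hyp : 0 < σ - y := by linarith [hy.2]
        have h2 : R₁ * (σ - y) ≤ 1 := (le_div_iff₀ hyp).mp hR'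
        have h3 : σ - y ≤ 1/R₁ := by
          rw [le_div_iff₀ hR₁pos]
          nlinarith
        have h4 : 1/R₁ ≤ (σ - ρ')/2 := by
          have h5 : 0 < 2/(σ - ρ') := by
            have : 0 < σ - ρ' := by linarith [hρ'lt]
            positivity
          have h6 := one_div_le_one_div_of_le h5 (le_max_left (2/(σ - ρ')) 1)
          rwa [one_div_div] at h6
        refine ⟨by linarith [hρ'lt], hy.2⟩
      · intro h hh y hyZ'
        have hyZ : y ∈ Set.Ioo (σ - δm) σ := ⟨lt_of_le_of_lt (by linarith) hyZ'.1, hyZ'.2⟩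
        obtain ⟨hfwd, hbwd⟩ := hzone h hh y hyZ'
        have hsq := hpar h hh
        obtain ⟨hylt, hyaff⟩ := haffine h hh y hyZ
        obtain ⟨hzlt, hzaff⟩ := haffine h hh ((h⁻¹ : Equiv.Perm ℝ) y) hbwd
        rw [Equiv.Perm.apply_inv_self] at hzaff
        refine ⟨hfwd, ?_, hbwd, ?_⟩
        · show 1/(σ - h y) = 1/(σ - y) + -(vc h * (vc h * σ + vd h))
          rw [hyaff, hsq]; ring
        · show 1/(σ - (h⁻¹ : Equiv.Perm ℝ) y) = 1/(σ - y) - -(vc h * (vc h * σ + vd h))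
          rw [hsq] at hzaff
          linarith [hzaff]
      · intro B
        set W : ℝ := max B 1 with hW
        have hWpos : 0 < W := lt_of_lt_of_le one_pos (le_max_right _ _)
        have hη : 0 < min δm (1/W) := lt_min hδmpos (by positivity)
        obtain ⟨y, hyO, hy1, hy2⟩ := hnear _ hη
        have hy1' : σ - y < min δm (1/W) := by linarith
        have hyZ : y ∈ Set.Ioo (σ - δm) σ :=
          ⟨by linarith [min_le_left δm (1/W)], hy2⟩
        refine ⟨y, hyO, hyZ, ?_⟩
        show B ≤ 1/(σ - y)
        have h1 : σ - y < 1/W := lt_of_lt_of_le hy1' (min_le_right _ _)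
        have h2 : 0 < σ - y := by linarith
        have h3 : 1/(1/W) < 1/(σ - y) := one_div_lt_one_div_of_lt h2 h1
        rw [one_div_one_div] at h3
        exact le_trans (le_max_left _ _) (le_of_lt h3)
    · -- hyperbolic case
      push_neg at hpar
      obtain ⟨h₀, hh₀, hμ₀⟩ := hpar
      -- σ is irrational
      have hirr : Irrational σ := by
        by_contra hrat
        obtain ⟨q, hq⟩ := not_not.mp hrat
        apply hμ₀
        set p : ℤ := q.num with hp
        set n : ℤ := (q.den : ℤ) with hn
        have hn0 : (n:ℝ) ≠ 0 := by
          rw [hn]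
          exact_mod_cast Nat.cast_ne_zero.mpr q.den_nz
        have hE1 : (p:ℝ) = σ * n := by
          rw [← hq, Rat.cast_def]
          rw [hp, hn]
          push_cast
          field_simp
        have hcop : IsCoprime p n := by
          rw [Int.isCoprime_iff_gcd_eq_one]
          show p.natAbs.gcd n.natAbs = 1
          rw [hp, hn, Int.natAbs_natCast]
          exact q.reduced
        obtain ⟨u, v, huv⟩ := hcop
        have hE3 : (u:ℝ) * (σ * n) + (v:ℝ) * n = 1 := by
          rw [← hE1]
          exact_mod_cast huv
        set m : ℤ := u*(AA h₀ 0 0 * p + AA h₀ 0 1 * n) + v*(AA h₀ 1 0 * p + AA h₀ 1 1 * n)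
          with hm
        set m' : ℤ := u*(AA h₀ 1 1 * p - AA h₀ 0 1 * n) + v*(AA h₀ 0 0 * n - AA h₀ 1 0 * p)
          with hm'
        have hafix := (hAfix h₀ hh₀).2
        simp only [hva, hvb, hvc, hvd] at hafix
        have hmR : (m:ℝ) = vc h₀ * σ + vd h₀ := by
          simp only [hva, hvb, hvc, hvd]
          rw [hm]
          push_cast
          rw [hE1]
          linear_combination ((n:ℝ)*(u:ℝ))*hafix +
            (((AA h₀ 1 0 : ℤ):ℝ)*σ + ((AA h₀ 1 1 : ℤ):ℝ))*hE3
        have hm'R : (m':ℝ) = va h₀ - σ * vc h₀ := by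
          simp only [hva, hvb, hvc, hvd]
          rw [hm']
          push_cast
          rw [hE1]
          linear_combination (-(n:ℝ)*(u:ℝ))*hafix +
            (((AA h₀ 0 0 : ℤ):ℝ) - σ*((AA h₀ 1 0 : ℤ):ℝ))*hE3
        have hmm' : (m:ℝ) * (m':ℝ) = 1 := by
          rw [hmR, hm'R]
          linear_combination hμ1 h₀ hh₀
        have hint : m * m' = 1 := by exact_mod_cast hmm'
        have hm2 : (m:ℝ)^2 = 1 := by
          rcases Int.eq_one_or_neg_one_of_mul_eq_one hint with h1 | h1 <;> rw [h1] <;> norm_num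
        rw [← hmR]
        exact hm2
      -- the leading coefficient of the germ of h₀ is nonzero
      have hc₀ne : vc h₀ ≠ 0 := by
        intro h0
        apply hμ₀
        have hlin0 : (va h₀ - vd h₀) * σ + vb h₀ = 0 := by
          linear_combination (hAfix h₀ hh₀).2 + σ^2 * h0
        have hlin : ((AA h₀ 0 0 - AA h₀ 1 1 : ℤ):ℝ) * σ + ((AA h₀ 0 1 : ℤ):ℝ) = 0 := by
          push_cast
          simp only [hva, hvb, hvc, hvd] at hlin0
          linear_combination hlin0
        obtain ⟨had, hb0⟩ := int_linear_zero _ _ σ hirr hlin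
        have had' : va h₀ = vd h₀ := by
          simp only [hva, hvd]
          have h9 : (AA h₀ 0 0 : ℤ) = AA h₀ 1 1 := by omega
          exact_mod_cast h9
        have hb0' : vb h₀ = 0 := by
          simp only [hvb]
          exact_mod_cast hb0
        have hvd2 : (vd h₀)^2 = 1 := by
          linear_combination hdet h₀ - vd h₀ * had' + vc h₀ * hb0'
        calc (vc h₀ * σ + vd h₀)^2 = (vd h₀)^2 := by rw [h0]; ring
          _ = 1 := hvd2
      -- second fixed point
      set σ' : ℝ := (va h₀ - vd h₀)/(vc h₀) - σ with hσ'def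
      have hτ : vc h₀ * σ' = va h₀ - vd h₀ - vc h₀ * σ := by
        rw [hσ'def]
        field_simp
      have hfix0' : va h₀ * σ' + vb h₀ = σ' * (vc h₀ * σ' + vd h₀) :=
        second_root _ _ _ _ _ _ hτ (hAfix h₀ hh₀).2
      have hσσ' : σ ≠ σ' := by
        intro heq
        apply hμ₀
        have h2 : va h₀ - σ * vc h₀ = vc h₀ * σ + vd h₀ := by
          rw [← heq] at hτ
          linarith [hτ]
        have h3 := hμ1 h₀ hh₀
        rw [h2] at h3
        linear_combination h3
      have hz'ne : σ - σ' ≠ 0 := sub_ne_zero.mpr hσσ'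
      set z' : ℝ := 1/(σ - σ') with hz'def
      -- the common-fixed-point identity for every generator
      have hkey : ∀ h ∈ S, vc h * (vc h * σ + vd h) =
          ((vc h * σ + vd h)^2 - 1) * z' := by
        intro h hh
        by_cases hch : vc h = 0
        · have hlin0 : (va h - vd h) * σ + vb h = 0 := by
            linear_combination (hAfix h hh).2 + σ^2 * hch
          have hlin : ((AA h 0 0 - AA h 1 1 : ℤ):ℝ) * σ + ((AA h 0 1 : ℤ):ℝ) = 0 := by
            push_cast
            simp only [hva, hvb, hvc, hvd] at hlin0
            linear_combination hlin0
          obtain ⟨had, hb0⟩ := int_linear_zero _ _ σ hirr hlin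
          have had' : va h = vd h := by
            simp only [hva, hvd]
            have h9 : (AA h 0 0 : ℤ) = AA h 1 1 := by omega
            exact_mod_cast h9
          have hb0' : vb h = 0 := by
            simp only [hvb]
            exact_mod_cast hb0
          have hvd2 : (vd h)^2 = 1 := by
            linear_combination hdet h - vd h * had' + vc h * hb0'
          rw [hch]
          have : (0 * σ + vd h)^2 - 1 = 0 := by
            rw [zero_mul, zero_add, hvd2]
            ring
          rw [this]
          ring
        · -- general case: h also fixes σ'
          set e : ℤ := AA h₀ 1 0 * (AA h 1 1 - AA h 0 0) - AA h 1 0 * (AA h₀ 1 1 - AA h₀ 0 0)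
            with hedef
          set f : ℤ := AA h 1 0 * AA h₀ 0 1 - AA h₀ 1 0 * AA h 0 1 with hfdef
          have q1 := (hAfix h hh).2
          have q2 := (hAfix h₀ hh₀).2
          have hlin : (e:ℝ)*σ + (f:ℝ) = 0 := by
            rw [hedef, hfdef]
            push_cast
            simp only [hva, hvb, hvc, hvd] at q1 q2
            linear_combination (-((AA h₀ 1 0 : ℤ):ℝ))*q1 + (((AA h 1 0 : ℤ):ℝ))*q2
          obtain ⟨he0, hf0⟩ := int_linear_zero e f σ hirr hlin
          have he' : (e:ℝ) = 0 := by exact_mod_cast he0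
          have hf' : (f:ℝ) = 0 := by exact_mod_cast hf0
          rw [hedef] at he'
          rw [hfdef] at hf'
          push_cast at he' hf'
          have q2' := hfix0'
          simp only [hva, hvb, hvc, hvd] at q2'
          have hJ : vc h₀ * (va h * σ' + vb h - σ' * (vc h * σ' + vd h)) = 0 := by
            simp only [hva, hvb, hvc, hvd]
            linear_combination ((AA h 1 0 : ℤ):ℝ)*q2' - σ'*he' - hf'
          have hfixh' : va h * σ' + vb h = σ' * (vc h * σ' + vd h) := by
            rcases mul_eq_zero.mp hJ with h1 | h1
            · exact absurd h1 hc₀ne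
            · linarith
          have hvieta := vieta_mul (va h) (vb h) (vc h) (vd h) σ σ' (hdet h) hσσ'
            (hAfix h hh).2 hfixh'
          rw [hz'def, mul_one_div, eq_div_iff hz'ne]
          linear_combination -hvieta
      -- zone width keeping 1/(σ-y) above |z'| + 1
      set δZ : ℝ := min δm (1/(|z'|+1)) with hδZ
      have hδZpos : 0 < δZ := lt_min hδmpos (by positivity)
      have hδZm : δZ ≤ δm := min_le_left _ _
      obtain ⟨ρ', hρ'ge, hρ'lt, hzone⟩ := zone δZ hδZpos
      have hw1 : ∀ y ∈ Set.Ioo (σ - δZ) σ, |z'| + 1 ≤ 1/(σ - y) := by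
        intro y hy
        have h2 : 0 < σ - y := by linarith [hy.2]
        have h1 : σ - y < 1/(|z'|+1) :=
          lt_of_lt_of_le (by linarith [hy.1]) (min_le_right δm (1/(|z'|+1)))
        have h3 : 1/(1/(|z'|+1)) < 1/(σ - y) := one_div_lt_one_div_of_lt h2 h1
        rw [one_div_one_div] at h3
        linarith
      have hwpos : ∀ y ∈ Set.Ioo (σ - δZ) σ, 1 ≤ 1/(σ - y) - z' := by
        intro y hy
        have := hw1 y hy
        have := le_abs_self z'
        linarith
      have hμsq : ∀ h ∈ S, 0 < (vc h * σ + vd h)^2 := by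
        intro h hh
        exact pow_two_pos_of_ne_zero (right_ne_zero_of_mul_eq_one (hμ1 h hh))
      set R₁ : ℝ := Real.log (max (2/(σ - ρ')) 1 + |z'| + 1) with hR₁
      refine core S O hinv (fun y => Real.log (1/(σ - y) - z')) (Set.Ioo (σ - δZ) σ)
        (Set.Ioo ρ' σ) (fun h => Real.log ((vc h * σ + vd h)^2)) R₁ ?_ ?_ ?_ ?_ ?_ ε hε
      · intro y hy
        exact ⟨lt_of_le_of_lt (by linarith) hy.1, hy.2⟩
      · rintro y₁ ⟨-, hy₁⟩ y₂ ⟨-, hy₂⟩ heq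
        simp only at heq
        have hw₁ := hwpos y₁ hy₁
        have hw₂ := hwpos y₂ hy₂
        have heqw : 1/(σ - y₁) - z' = 1/(σ - y₂) - z' :=
          Real.log_injOn_pos (Set.mem_Ioi.mpr (by linarith)) (Set.mem_Ioi.mpr (by linarith)) heq
        have heq2 : (σ - y₁)⁻¹ = (σ - y₂)⁻¹ := by
          rw [← one_div, ← one_div]
          linarith
        have := inv_injective heq2
        linarith [this]
      · intro y hy hR
        have hw0 := hwpos y hy
        have hR' : R₁ ≤ Real.log (1/(σ - y) - z') := hR
        have hexp : max (2/(σ - ρ')) 1 + |z'| + 1 ≤ 1/(σ - y) - z' := by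
          have h1 := (Real.le_log_iff_exp_le (by linarith : (0:ℝ) < 1/(σ - y) - z')).mp hR'
          rwa [hR₁, Real.exp_log (by positivity)] at h1
        have hQ : 2/(σ - ρ') ≤ 1/(σ - y) := by
          have := le_abs_self z'
          have := neg_abs_le z'
          have h2 := le_max_left (2/(σ - ρ')) 1
          linarith
        have hρσ : 0 < σ - ρ' := by linarith [hρ'lt]
        have hyp : 0 < σ - y := by linarith [hy.2]
        have h2 : (2/(σ - ρ')) * (σ - y) ≤ 1 := by
          calc (2/(σ - ρ')) * (σ - y) ≤ (1/(σ - y)) * (σ - y) :=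
                mul_le_mul_of_nonneg_right hQ (le_of_lt hyp)
            _ = 1 := by field_simp
        have h3 : σ - y ≤ (σ - ρ')/2 := by
          have h4 := (div_le_div_iff₀ hρσ hyp).mp hQ
          linarith
        refine ⟨by linarith, hy.2⟩
      · intro h hh y hyZ'
        have hyZ : y ∈ Set.Ioo (σ - δZ) σ := ⟨lt_of_le_of_lt (by linarith) hyZ'.1, hyZ'.2⟩
        have hyZm : y ∈ Set.Ioo (σ - δm) σ := ⟨lt_of_le_of_lt (by linarith) hyZ.1, hyZ.2⟩
        obtain ⟨hfwd, hbwd⟩ := hzone h hh y hyZ'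
        obtain ⟨hylt, hyaff⟩ := haffine h hh y hyZm
        have hbwdm : (h⁻¹ : Equiv.Perm ℝ) y ∈ Set.Ioo (σ - δm) σ :=
          ⟨lt_of_le_of_lt (by linarith) hbwd.1, hbwd.2⟩
        obtain ⟨hzlt, hzaff⟩ := haffine h hh ((h⁻¹ : Equiv.Perm ℝ) y) hbwdm
        rw [Equiv.Perm.apply_inv_self] at hzaff
        have hμ2 := hμsq h hh
        have hwy := hwpos y hyZ
        have hwfy := hwpos _ hfwd
        have hwby := hwpos _ hbwd
        refine ⟨hfwd, ?_, hbwd, ?_⟩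
        · show Real.log (1/(σ - h y) - z') =
            Real.log (1/(σ - y) - z') + Real.log ((vc h * σ + vd h)^2)
          have hrew : 1/(σ - h y) - z' = ((vc h * σ + vd h)^2) * (1/(σ - y) - z') := by
            rw [hyaff]
            linear_combination -(hkey h hh)
          rw [hrew, Real.log_mul (ne_of_gt hμ2) (by linarith : 1/(σ - y) - z' ≠ 0)]
          ring
        · show Real.log (1/(σ - (h⁻¹ : Equiv.Perm ℝ) y) - z') =
            Real.log (1/(σ - y) - z') - Real.log ((vc h * σ + vd h)^2)
          have hrew : 1/(σ - y) - z' =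
              ((vc h * σ + vd h)^2) * (1/(σ - (h⁻¹ : Equiv.Perm ℝ) y) - z') := by
            rw [hzaff]
            linear_combination -(hkey h hh)
          rw [hrew, Real.log_mul (ne_of_gt hμ2)
            (by linarith : 1/(σ - (h⁻¹ : Equiv.Perm ℝ) y) - z' ≠ 0)]
          ring
      · intro B
        set W : ℝ := max (Real.exp B + |z'| + 1) 1 with hW
        have hWpos : 0 < W := lt_of_lt_of_le one_pos (le_max_right _ _)
        have hη : 0 < min δZ (1/W) := lt_min hδZpos (by positivity)
        obtain ⟨y, hyO, hy1, hy2⟩ := hnear _ hη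
        have hy1' : σ - y < min δZ (1/W) := by linarith
        have hyZ : y ∈ Set.Ioo (σ - δZ) σ :=
          ⟨by linarith [min_le_left δZ (1/W)], hy2⟩
        refine ⟨y, hyO, hyZ, ?_⟩
        show B ≤ Real.log (1/(σ - y) - z')
        have h1 : σ - y < 1/W := lt_of_lt_of_le hy1' (min_le_right _ _)
        have h2 : 0 < σ - y := by linarith
        have h3 : 1/(1/W) < 1/(σ - y) := one_div_lt_one_div_of_lt h2 h1
        rw [one_div_one_div] at h3
        have h4 : Real.exp B + |z'| + 1 ≤ W := le_max_left _ _
        have h5 : Real.exp B ≤ 1/(σ - y) - z' := by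
          have := le_abs_self z'
          linarith
        have h6 : 0 < 1/(σ - y) - z' := lt_of_lt_of_le (Real.exp_pos B) h5
        exact (Real.le_log_iff_exp_le h6).mpr h5

end
end

section
/- Let X be a countable set and let Q : X → X → ℝ≥0∞ be a Markov kernel, i.e. ∑'_{y ∈ X} Q(x, y) = 1 for every x ∈ X. Then for all x, y ∈ X, the expected number of visits to y starting from x is at most the expected number of visits to y starting from y: ∑'_{n ∈ ℕ} Qⁿ(x, y) ≤ ∑'_{n ∈ ℕ} Qⁿ(y, y), where Q⁰(u, v) = 1 if u = v and 0 otherwise, and Q^{n+1}(u, v) = ∑'_{z ∈ X} Q(u, z) · Qⁿ(z, v). -/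
open scoped ENNReal

noncomputable section

/- Iterates of a kernel: `kerPow Q 0` is the identity kernel and
`kerPow Q (n+1) x y = ∑' z, Q x z * kerPow Q n z y`. -/
open Classical in
def kerPow {X : Type*} (Q : X → X → ℝ≥0∞) : ℕ → X → X → ℝ≥0∞
  | 0 => fun x y => if x = y then 1 else 0
  | n + 1 => fun x y => ∑' z : X, Q x z * kerPow Q n z y

/- First-visit kernel: `firstVisit Q y n x` is the probability that the chain started
at `x` first visits `y` at time `n` (with time `0` counting as a visit when `x = y`). -/
open Classical in
def firstVisit {X : Type*} (Q : X → X → ℝ≥0∞) (y : X) : ℕ → X → ℝ≥0∞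
  | 0 => fun x => if x = y then 1 else 0
  | n + 1 => fun x => if x = y then 0 else ∑' z : X, Q x z * firstVisit Q y n z

open Classical in
/-- First-passage decomposition. -/
lemma kerPow_eq_sum_firstVisit {X : Type*} (Q : X → X → ℝ≥0∞) (y : X) :
    ∀ (n : ℕ) (x : X), kerPow Q n x y =
      ∑ k ∈ Finset.range (n + 1), firstVisit Q y k x * kerPow Q (n - k) y y := by
  intro n
  induction n with
  | zero =>
    intro x
    simp [kerPow, firstVisit]
  | succ n ih =>
    intro x
    by_cases hxy : x = y
    · subst hxy
      rw [Finset.sum_range_succ']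
      have h1 : ∀ k ∈ Finset.range (n + 1),
          firstVisit Q x (k + 1) x * kerPow Q (n + 1 - (k + 1)) x x = 0 := by
        intro k _
        have : firstVisit Q x (k + 1) x = 0 := by
          simp [firstVisit]
        rw [this, zero_mul]
      rw [Finset.sum_congr rfl h1]
      have h0 : firstVisit Q x 0 x = 1 := by simp [firstVisit]
      simp [h0]
    · show (∑' z : X, Q x z * kerPow Q n z y) = _
      have hz : ∀ z : X, Q x z * kerPow Q n z y =
          ∑ k ∈ Finset.range (n + 1), Q x z * firstVisit Q y k z * kerPow Q (n - k) y y := by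
        intro z
        rw [ih z, Finset.mul_sum]
        exact Finset.sum_congr rfl fun k _ => by ring
      calc (∑' z : X, Q x z * kerPow Q n z y)
          = ∑' z : X, ∑ k ∈ Finset.range (n + 1),
              Q x z * firstVisit Q y k z * kerPow Q (n - k) y y := tsum_congr hz
        _ = ∑ k ∈ Finset.range (n + 1),
              ∑' z : X, Q x z * firstVisit Q y k z * kerPow Q (n - k) y y :=
            Summable.tsum_finsetSum fun _ _ => ENNReal.summable
        _ = ∑ k ∈ Finset.range (n + 1),
              firstVisit Q y (k + 1) x * kerPow Q (n + 1 - (k + 1)) y y := by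
            refine Finset.sum_congr rfl fun k _ => ?_
            rw [Nat.succ_sub_succ]
            have : firstVisit Q y (k + 1) x = ∑' z : X, Q x z * firstVisit Q y k z := by
              simp only [firstVisit, if_neg hxy]
            rw [this, ENNReal.tsum_mul_right]
        _ = ∑ k ∈ Finset.range (n + 2), firstVisit Q y k x * kerPow Q (n + 1 - k) y y := by
            conv_rhs => rw [Finset.sum_range_succ']
            have h0 : firstVisit Q y 0 x = 0 := by simp only [firstVisit, if_neg hxy]
            rw [h0, zero_mul, add_zero]

open Classical in
lemma sum_firstVisit_le_one {X : Type*} (Q : X → X → ℝ≥0∞)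
    (hQ : ∀ x : X, ∑' y : X, Q x y = 1) (y : X) :
    ∀ (N : ℕ) (x : X), ∑ k ∈ Finset.range (N + 1), firstVisit Q y k x ≤ 1 := by
  intro N
  induction N with
  | zero =>
    intro x
    simp only [zero_add, Finset.range_one, Finset.sum_singleton, firstVisit]
    split
    · exact le_rfl
    · exact zero_le_one
  | succ N ih =>
    intro x
    rw [Finset.sum_range_succ']
    by_cases hxy : x = y
    · subst hxy
      have h1 : ∀ k ∈ Finset.range (N + 1), firstVisit Q x (k + 1) x = 0 := by
        intro k _; simp [firstVisit]
      rw [Finset.sum_congr rfl h1]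
      have h0 : firstVisit Q x 0 x = 1 := by simp [firstVisit]
      simp [h0]
    · have h1 : ∀ k ∈ Finset.range (N + 1),
          firstVisit Q y (k + 1) x = ∑' z : X, Q x z * firstVisit Q y k z := by
        intro k _; simp only [firstVisit, if_neg hxy]
      rw [Finset.sum_congr rfl h1]
      have h0 : firstVisit Q y 0 x = 0 := by simp only [firstVisit, if_neg hxy]
      rw [h0, add_zero]
      calc ∑ k ∈ Finset.range (N + 1), ∑' z : X, Q x z * firstVisit Q y k z
          = ∑' z : X, ∑ k ∈ Finset.range (N + 1), Q x z * firstVisit Q y k z :=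
            (Summable.tsum_finsetSum fun _ _ => ENNReal.summable).symm
        _ = ∑' z : X, Q x z * ∑ k ∈ Finset.range (N + 1), firstVisit Q y k z :=
            tsum_congr fun z => (Finset.mul_sum _ _ _).symm
        _ ≤ ∑' z : X, Q x z * 1 :=
            ENNReal.tsum_le_tsum fun z => mul_le_mul_right (ih z) _
        _ = 1 := by simpa using hQ x

/-- Cauchy product for `ℝ≥0∞`-valued series. -/
lemma ennreal_cauchy_product (a b : ℕ → ℝ≥0∞) :
    ∑' n : ℕ, ∑ k ∈ Finset.range (n + 1), a k * b (n - k) =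
      (∑' n : ℕ, a n) * ∑' n : ℕ, b n := by
  simp_rw [← Finset.Nat.sum_antidiagonal_eq_sum_range_succ (fun k l => a k * b l)]
  have h1 : ∀ n : ℕ, ∑ kl ∈ Finset.HasAntidiagonal.antidiagonal n, a kl.1 * b kl.2 =
      ∑' kl : (Finset.HasAntidiagonal.antidiagonal n : Finset (ℕ × ℕ)), a (kl : ℕ × ℕ).1 * b (kl : ℕ × ℕ).2 := by
    intro n
    rw [tsum_fintype]
    exact (Finset.sum_finset_coe _ _).symm
  calc ∑' n : ℕ, ∑ kl ∈ Finset.HasAntidiagonal.antidiagonal n, a kl.1 * b kl.2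
      = ∑' n : ℕ, ∑' kl : (Finset.HasAntidiagonal.antidiagonal n : Finset (ℕ × ℕ)),
          a (kl : ℕ × ℕ).1 * b (kl : ℕ × ℕ).2 := tsum_congr h1
    _ = ∑' p : ℕ × ℕ, a p.1 * b p.2 := by
          rw [← Finset.HasAntidiagonal.sigmaAntidiagonalEquivProd.tsum_eq (fun p : ℕ × ℕ => a p.1 * b p.2),
              ENNReal.tsum_sigma']
          rfl
    _ = (∑' n : ℕ, a n) * ∑' n : ℕ, b n := by
          rw [ENNReal.tsum_prod' (f := fun p : ℕ × ℕ => a p.1 * b p.2)]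
          simp only [ENNReal.tsum_mul_left, ENNReal.tsum_mul_right]

/-- For a Markov kernel `Q` on a countable set, the expected number of visits to `y`
starting from `x` is at most the expected number of visits to `y` starting from `y`. -/
theorem expected_visits_le_expected_visits_from_target
    {X : Type*} [Countable X] (Q : X → X → ℝ≥0∞)
    (hQ : ∀ x : X, ∑' y : X, Q x y = 1) (x y : X) :
    ∑' n : ℕ, kerPow Q n x y ≤ ∑' n : ℕ, kerPow Q n y y := by
  have hdec : ∑' n : ℕ, kerPow Q n x y =
      (∑' k : ℕ, firstVisit Q y k x) * ∑' m : ℕ, kerPow Q m y y := by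
    rw [← ennreal_cauchy_product]
    exact tsum_congr fun n => kerPow_eq_sum_firstVisit Q y n x
  have hle : (∑' k : ℕ, firstVisit Q y k x) ≤ 1 := by
    refine Summable.tsum_le_of_sum_range_le ENNReal.summable fun n => ?_
    cases n with
    | zero => simp
    | succ N => exact sum_firstVisit_le_one Q hQ y N x
  calc ∑' n : ℕ, kerPow Q n x y
      = (∑' k : ℕ, firstVisit Q y k x) * ∑' m : ℕ, kerPow Q m y y := hdec
    _ ≤ 1 * ∑' m : ℕ, kerPow Q m y y := mul_le_mul_left hle _
    _ = ∑' m : ℕ, kerPow Q m y y := one_mul _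

end
end

section
/- Let X be a countable set and let P : X → X → ℝ≥0∞ be a doubly stochastic kernel, i.e. ∑'_{y} P(x, y) = 1 for every x and ∑'_{x} P(x, y) = 1 for every y. Let Pᵀ denote the transposed kernel Pᵀ(x, y) = P(y, x). Let o ∈ X be such that ∑'_{n ∈ ℕ} (Pᵀ)ⁿ(o, o) < ∞, and let f : X → ℝ≥0∞ satisfy ∑'_{x ∈ X} f(x) < ∞. Then ∑'_{n ∈ ℕ} ∑'_{x ∈ X} Pⁿ(o, x) · f(x) ≤ (∑'_{x ∈ X} f(x)) · (∑'_{n ∈ ℕ} (Pᵀ)ⁿ(o, o)); in particular this double sum is finite. -/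
open scoped ENNReal

noncomputable section

open Classical in
lemma kerPow_succ_right {X : Type*} (Q : X → X → ℝ≥0∞) (n : ℕ) (x y : X) :
    kerPow Q (n + 1) x y = ∑' z : X, kerPow Q n x z * Q z y := by
  induction n generalizing x y with
  | zero =>
      simp only [kerPow, mul_ite, ite_mul, mul_one, one_mul, mul_zero, zero_mul]
      rw [tsum_eq_single y (by intro b hb; simp [hb]),
        tsum_eq_single x (by intro b hb; simp [Ne.symm hb])]
      simp
  | succ n ih =>
      show (∑' z : X, Q x z * kerPow Q (n + 1) z y) = _
      calc ∑' z : X, Q x z * kerPow Q (n + 1) z y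
          = ∑' z : X, Q x z * ∑' w : X, kerPow Q n z w * Q w y := by
            simp only [ih]
        _ = ∑' z : X, ∑' w : X, Q x z * (kerPow Q n z w * Q w y) := by
            simp only [ENNReal.tsum_mul_left]
        _ = ∑' w : X, ∑' z : X, Q x z * (kerPow Q n z w * Q w y) := ENNReal.tsum_comm
        _ = ∑' w : X, (∑' z : X, Q x z * kerPow Q n z w) * Q w y := by
            congr 1; funext w
            rw [← ENNReal.tsum_mul_right]
            congr 1; funext z; ring
        _ = ∑' w : X, kerPow Q (n + 1) x w * Q w y := rfl

open Classical in
lemma kerPow_transpose {X : Type*} (Q : X → X → ℝ≥0∞) (n : ℕ) (x y : X) :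
    kerPow (fun a b => Q b a) n x y = kerPow Q n y x := by
  induction n generalizing x y with
  | zero => simp [kerPow, eq_comm]
  | succ n ih =>
      show (∑' z : X, Q z x * kerPow (fun a b => Q b a) n z y) = _
      rw [kerPow_succ_right]
      congr 1; funext z
      rw [ih, mul_comm]

/-- Green function comparison for a substochastic kernel. -/
lemma green_le {X : Type*} (Q : X → X → ℝ≥0∞) (hQ : ∀ x, ∑' y : X, Q x y ≤ 1)
    (o x : X) : ∑' n : ℕ, kerPow Q n x o ≤ ∑' n : ℕ, kerPow Q n o o := by
  classical
  have key : ∀ N : ℕ, ∀ x : X,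
      (∑ n ∈ Finset.range N, kerPow Q n x o) ≤ ∑ n ∈ Finset.range N, kerPow Q n o o := by
    intro N
    induction N with
    | zero => intro x; simp
    | succ N ih =>
        intro x
        by_cases hx : x = o
        · subst hx; exact le_rfl
        · have h1 : (∑ n ∈ Finset.range (N + 1), kerPow Q n x o)
              = ∑' z : X, Q x z * ∑ n ∈ Finset.range N, kerPow Q n z o := by
            rw [Finset.sum_range_succ']
            have h0 : kerPow Q 0 x o = 0 := by simp [kerPow, hx]
            rw [h0, add_zero]
            have : ∀ n ∈ Finset.range N,
                kerPow Q (n + 1) x o = ∑' z : X, Q x z * kerPow Q n z o := fun n _ => rfl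
            rw [Finset.sum_congr rfl this, ← Summable.tsum_finsetSum (fun i _ => ENNReal.summable)]
            congr 1; funext z
            rw [Finset.mul_sum]
          calc (∑ n ∈ Finset.range (N + 1), kerPow Q n x o)
              = ∑' z : X, Q x z * ∑ n ∈ Finset.range N, kerPow Q n z o := h1
            _ ≤ ∑' z : X, Q x z * ∑ n ∈ Finset.range N, kerPow Q n o o := by
                exact ENNReal.tsum_le_tsum fun z => mul_le_mul_right (ih z) _
            _ = (∑' z : X, Q x z) * ∑ n ∈ Finset.range N, kerPow Q n o o :=
                ENNReal.tsum_mul_right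
            _ ≤ 1 * ∑ n ∈ Finset.range N, kerPow Q n o o :=
                mul_le_mul_left (hQ x) _
            _ = ∑ n ∈ Finset.range N, kerPow Q n o o := one_mul _
            _ ≤ ∑ n ∈ Finset.range (N + 1), kerPow Q n o o :=
                Finset.sum_le_sum_of_subset (Finset.range_subset_range.2 (Nat.le_succ N))
  rw [ENNReal.tsum_eq_iSup_nat, ENNReal.tsum_eq_iSup_nat]
  exact iSup_mono fun N => key N x

/-- Comparison bound for a doubly stochastic kernel `P` on a countable set: if the
transposed walk is transient at `o` and `f` is summable, then
`∑' n x, Pⁿ(o, x) · f(x) ≤ (∑' x, f x) · (∑' n, (Pᵀ)ⁿ(o, o))`; in particular the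
double sum is finite. -/
theorem doubly_stochastic_green_sum_le
    {X : Type*} [Countable X] (P : X → X → ℝ≥0∞)
    (hrow : ∀ x : X, ∑' y : X, P x y = 1)
    (hcol : ∀ y : X, ∑' x : X, P x y = 1)
    (o : X) (ho : ∑' n : ℕ, kerPow (fun x y => P y x) n o o ≠ ⊤)
    (f : X → ℝ≥0∞) (hf : ∑' x : X, f x ≠ ⊤) :
    (∑' (n : ℕ) (x : X), kerPow P n o x * f x ≤
      (∑' x : X, f x) * ∑' n : ℕ, kerPow (fun x y => P y x) n o o) ∧
    ∑' (n : ℕ) (x : X), kerPow P n o x * f x ≠ ⊤ := by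
  set Q : X → X → ℝ≥0∞ := fun x y => P y x with hQdef
  set G : ℝ≥0∞ := ∑' n : ℕ, kerPow Q n o o with hG
  have hQ : ∀ x, ∑' y : X, Q x y ≤ 1 := fun x => (hcol x).le
  have hmain : (∑' (n : ℕ) (x : X), kerPow P n o x * f x) ≤ (∑' x : X, f x) * G := by
    calc (∑' (n : ℕ) (x : X), kerPow P n o x * f x)
        = ∑' (x : X) (n : ℕ), kerPow P n o x * f x := ENNReal.tsum_comm
      _ = ∑' x : X, (∑' n : ℕ, kerPow P n o x) * f x := by
          congr 1; funext x; rw [ENNReal.tsum_mul_right]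
      _ = ∑' x : X, (∑' n : ℕ, kerPow Q n x o) * f x := by
          congr 1; funext x
          congr 1
          congr 1; funext n
          rw [hQdef, kerPow_transpose]
      _ ≤ ∑' x : X, G * f x := ENNReal.tsum_le_tsum fun x =>
          mul_le_mul_left (green_le Q hQ o x) _
      _ = G * ∑' x : X, f x := ENNReal.tsum_mul_left
      _ = (∑' x : X, f x) * G := mul_comm _ _
  refine ⟨hmain, ?_⟩
  exact ne_top_of_le_ne_top (ENNReal.mul_ne_top hf ho) hmain
end
end
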